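/- arXiv:2510.17470 — 7 statements merged into one kernel-verified Lean document; each statement's English description precedes it below -/
import Mathlib

section
/- With S_m and M_N the explicit Gamma-product evaluations of the Selberg and Morris integrals, the identity S_m(η₂ − m, η₁)/S_m(η₂ − m, η₁ + N) = M_N(η₁ + m, η₂)/M_N(η₁, η₂) holds for all parameters where both sides are defined. -/
open Finset

/-- Selberg integral evaluation `S_N(α,β)`. -/
noncomputable def Sel (N : ℕ) (α β : ℂ) : ℂ :=
  ∏ j ∈ Finset.range N,
    Complex.Gamma (α + j + 1) * Complex.Gamma (β + j + 1) * Complex.Gamma ((j : ℂ) + 2)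
      / Complex.Gamma (α + β + N + j + 1)

/-- Morris integral evaluation `M_N(α,β)`. -/
noncomputable def Mor (N : ℕ) (α β : ℂ) : ℂ :=
  (2 * (Real.pi : ℂ)) ^ N *
    ∏ j ∈ Finset.range N,
      Complex.Gamma (α + β + j + 1) * Complex.Gamma ((j : ℂ) + 2)
        / (Complex.Gamma (α + j + 1) * Complex.Gamma (β + j + 1))

noncomputable def Pg (z : ℂ) (k : ℕ) : ℂ :=
  ∏ j ∈ Finset.range k, Complex.Gamma (z + j + 1)

lemma Pg_key (z : ℂ) (a b : ℕ) : Pg z a * Pg (z + a) b = Pg z (a + b) := by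
  unfold Pg
  rw [Finset.prod_range_add]
  congr 1
  refine Finset.prod_congr rfl fun j _ => ?_
  push_cast
  ring_nf

lemma Pg_one_ne_zero (k : ℕ) : Pg 1 k ≠ 0 := by
  unfold Pg
  rw [Finset.prod_ne_zero_iff]
  intro j _
  rw [show (1 : ℂ) + j + 1 = ((j + 1 : ℕ) : ℂ) + 1 by push_cast; ring,
    Complex.Gamma_nat_eq_factorial]
  exact_mod_cast Nat.factorial_ne_zero (j + 1)

lemma Sel_eq (k : ℕ) (α β : ℂ) :
    Sel k α β = Pg α k * Pg β k * Pg 1 k / Pg (α + β + k) k := by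
  unfold Sel Pg
  rw [← Finset.prod_mul_distrib, ← Finset.prod_mul_distrib, ← Finset.prod_div_distrib]
  refine Finset.prod_congr rfl fun j _ => ?_
  ring_nf

lemma Mor_eq (k : ℕ) (α β : ℂ) :
    Mor k α β = (2 * (Real.pi : ℂ)) ^ k * (Pg (α + β) k * Pg 1 k / (Pg α k * Pg β k)) := by
  unfold Mor Pg
  congr 1
  rw [← Finset.prod_mul_distrib, ← Finset.prod_mul_distrib, ← Finset.prod_div_distrib]
  refine Finset.prod_congr rfl fun j _ => ?_
  ring_nf

lemma core (z₁ z₂ : ℂ) (m N : ℕ) :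
    Pg z₁ m * Pg (z₂ + N) m * (Pg (z₁ + m) N * Pg z₂ N)
      = Pg z₁ N * Pg (z₂ + m) N * (Pg (z₁ + N) m * Pg z₂ m) := by
  calc Pg z₁ m * Pg (z₂ + N) m * (Pg (z₁ + m) N * Pg z₂ N)
      = (Pg z₁ m * Pg (z₁ + m) N) * (Pg z₂ N * Pg (z₂ + N) m) := by ring
    _ = Pg z₁ (m + N) * Pg z₂ (N + m) := by rw [Pg_key, Pg_key]
    _ = Pg z₁ (N + m) * Pg z₂ (m + N) := by rw [add_comm m N]
    _ = (Pg z₁ N * Pg (z₁ + N) m) * (Pg z₂ m * Pg (z₂ + m) N) := by rw [Pg_key, Pg_key]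
    _ = Pg z₁ N * Pg (z₂ + m) N * (Pg (z₁ + N) m * Pg z₂ m) := by ring

/-- `S_m(η₂-m, η₁)/S_m(η₂-m, η₁+N) = M_N(η₁+m, η₂)/M_N(η₁, η₂)`,
for parameters where all Gamma factors are nonzero. -/
theorem selberg_morris_identity₂ (m N : ℕ) (hm : 1 ≤ m) (hN : 1 ≤ N) (η₁ η₂ : ℂ)
    (h1 : ∀ j ∈ Finset.range m,
      Complex.Gamma (η₂ - m + j + 1) ≠ 0 ∧ Complex.Gamma (η₁ + j + 1) ≠ 0 ∧
      Complex.Gamma (η₁ + N + j + 1) ≠ 0 ∧ Complex.Gamma (η₁ + η₂ + j + 1) ≠ 0 ∧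
      Complex.Gamma (η₁ + η₂ + N + j + 1) ≠ 0)
    (h2 : ∀ j ∈ Finset.range N,
      Complex.Gamma (η₁ + m + j + 1) ≠ 0 ∧ Complex.Gamma (η₁ + j + 1) ≠ 0 ∧
      Complex.Gamma (η₂ + j + 1) ≠ 0 ∧ Complex.Gamma (η₁ + η₂ + j + 1) ≠ 0 ∧
      Complex.Gamma (η₁ + η₂ + m + j + 1) ≠ 0) :
    Sel m (η₂ - m) η₁ / Sel m (η₂ - m) (η₁ + N)
      = Mor N (η₁ + m) η₂ / Mor N η₁ η₂ := by
  have e1 : η₂ - m + η₁ + m = η₁ + η₂ := by ring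
  have e2 : η₂ - m + (η₁ + N) + m = η₁ + η₂ + N := by ring
  have e3 : η₁ + (m : ℂ) + η₂ = η₁ + η₂ + m := by ring
  rw [Sel_eq, Sel_eq, Mor_eq, Mor_eq, e1, e2, e3]
  -- nonzero facts
  have hA : Pg (η₂ - m) m ≠ 0 := Finset.prod_ne_zero_iff.mpr fun j hj => (h1 j hj).1
  have hB : Pg η₁ m ≠ 0 := Finset.prod_ne_zero_iff.mpr fun j hj => (h1 j hj).2.1
  have hC : Pg (η₁ + N) m ≠ 0 := Finset.prod_ne_zero_iff.mpr fun j hj => (h1 j hj).2.2.1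
  have hD : Pg (η₁ + η₂) m ≠ 0 := Finset.prod_ne_zero_iff.mpr fun j hj => (h1 j hj).2.2.2.1
  have hE : Pg (η₁ + η₂ + N) m ≠ 0 := Finset.prod_ne_zero_iff.mpr fun j hj => (h1 j hj).2.2.2.2
  have hF : Pg (η₁ + m) N ≠ 0 := Finset.prod_ne_zero_iff.mpr fun j hj => (h2 j hj).1
  have hG : Pg η₁ N ≠ 0 := Finset.prod_ne_zero_iff.mpr fun j hj => (h2 j hj).2.1
  have hH : Pg η₂ N ≠ 0 := Finset.prod_ne_zero_iff.mpr fun j hj => (h2 j hj).2.2.1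
  have hI : Pg (η₁ + η₂) N ≠ 0 := Finset.prod_ne_zero_iff.mpr fun j hj => (h2 j hj).2.2.2.1
  have hJ : Pg (η₁ + η₂ + m) N ≠ 0 := Finset.prod_ne_zero_iff.mpr fun j hj => (h2 j hj).2.2.2.2
  have h1m := Pg_one_ne_zero m
  have h1N := Pg_one_ne_zero N
  have hpi : (2 * (Real.pi : ℂ)) ^ N ≠ 0 := by
    apply pow_ne_zero
    simp [Real.pi_ne_zero, Complex.ofReal_ne_zero]
  rw [div_eq_div_iff]
  · field_simp
    linear_combination core η₁ (η₁ + η₂) m N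
  · apply div_ne_zero
    · exact mul_ne_zero (mul_ne_zero hA hC) h1m
    · exact hE
  · apply mul_ne_zero hpi
    apply div_ne_zero (mul_ne_zero hI h1N) (mul_ne_zero hG hH)
end

section
/- For real numbers b > a > 0 with x ∈ (a,b) fixed, the principal-value integral ⨍_a^b (1/y) √((b−y)(y−a))/(x−y) dy equals π (1 − √(ab)/x). -/
open Real Filter Set

set_option maxHeartbeats 1000000

noncomputable def pvH (a b x : ℝ) : ℝ → ℝ := fun y =>
  Real.arcsin ((2*y-a-b)/(b-a))
  - Real.sqrt (a*b)/x * Real.arcsin (((a+b)*y-2*a*b)/((b-a)*y))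
  + Real.sqrt ((b-x)*(x-a))/x *
      (Real.log ((b-y)*(x-a)+(y-a)*(b-x)
        + 2*Real.sqrt ((b-x)*(x-a))*Real.sqrt ((b-y)*(y-a)))
       - Real.log (y-x))

lemma pvH_deriv (a b x : ℝ) (ha : 0 < a) (hax : a < x) (hxb : x < b)
    (y : ℝ) (hay : a < y) (hyb : y < b) (hyx : y ≠ x) :
    HasDerivAt (pvH a b x) (Real.sqrt ((b-y)*(y-a)) / (y*(x-y))) y := by
  have hab : a < b := hax.trans hxb
  have hba : b - a ≠ 0 := by linarith
  have hy0 : (0:ℝ) < y := ha.trans hay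
  have hx0 : (0:ℝ) < x := ha.trans hax
  have hr2 : Real.sqrt ((b-y)*(y-a)) ^ 2 = (b-y)*(y-a) :=
    Real.sq_sqrt (by nlinarith)
  have hrpos : 0 < Real.sqrt ((b-y)*(y-a)) :=
    Real.sqrt_pos.2 (by nlinarith)
  have hp2 : Real.sqrt ((b-x)*(x-a)) ^ 2 = (b-x)*(x-a) :=
    Real.sq_sqrt (by nlinarith)
  have hppos : 0 < Real.sqrt ((b-x)*(x-a)) :=
    Real.sqrt_pos.2 (by nlinarith)
  have hs2 : Real.sqrt (a*b) ^ 2 = a*b := Real.sq_sqrt (by nlinarith)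
  have hspos : 0 < Real.sqrt (a*b) := Real.sqrt_pos.2 (by nlinarith)
  set r := Real.sqrt ((b-y)*(y-a)) with hrdef
  set p := Real.sqrt ((b-x)*(x-a)) with hpdef
  set s := Real.sqrt (a*b) with hsdef
  -- u bounds
  have hu2 : 1 - ((2*y-a-b)/(b-a))^2 = (2*r/(b-a))^2 := by
    field_simp
    linear_combination (-4)*hr2
  have hu2pos : 0 < 1 - ((2*y-a-b)/(b-a))^2 := by
    rw [hu2]; positivity
  have hu1 : (2*y-a-b)/(b-a) ≠ -1 := by
    intro h; rw [h] at hu2pos; norm_num at hu2pos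
  have hu1' : (2*y-a-b)/(b-a) ≠ 1 := by
    intro h; rw [h] at hu2pos; norm_num at hu2pos
  have hv2 : 1 - (((a+b)*y-2*a*b)/((b-a)*y))^2 = (2*s*r/((b-a)*y))^2 := by
    field_simp
    linear_combination (4*(b-y)*(y-a) - 8*r^2)*hs2 + (4*s^2 - 8*a*b)*hr2
  have hv2pos : 0 < 1 - (((a+b)*y-2*a*b)/((b-a)*y))^2 := by
    rw [hv2]; positivity
  have hv1 : ((a+b)*y-2*a*b)/((b-a)*y) ≠ -1 := by
    intro h; rw [h] at hv2pos; norm_num at hv2pos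
  have hv1' : ((a+b)*y-2*a*b)/((b-a)*y) ≠ 1 := by
    intro h; rw [h] at hv2pos; norm_num at hv2pos
  -- g positivity
  have hgpos : 0 < (b-y)*(x-a)+(y-a)*(b-x) + 2*p*r := by
    have h1 : 0 < (b-y)*(x-a) := by nlinarith
    have h2 : 0 < (y-a)*(b-x) := by nlinarith
    positivity
  -- derivative components
  have hu : HasDerivAt (fun y : ℝ => (2*y-a-b)/(b-a)) (2/(b-a)) y := by
    have : HasDerivAt (fun y : ℝ => 2*y-a-b) 2 y := by
      simpa using (((hasDerivAt_id y).const_mul 2).sub_const a).sub_const b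
    exact this.div_const _
  have harc1 : HasDerivAt (fun y : ℝ => Real.arcsin ((2*y-a-b)/(b-a)))
      (1 / Real.sqrt (1 - ((2*y-a-b)/(b-a))^2) * (2/(b-a))) y := by
    have := (Real.hasDerivAt_arcsin hu1 hu1').comp y hu
    simpa [Function.comp_def] using this
  have hvd : HasDerivAt (fun y : ℝ => ((a+b)*y-2*a*b)/((b-a)*y))
      (((a+b)*((b-a)*y) - ((a+b)*y-2*a*b)*(b-a)) / ((b-a)*y)^2) y := by
    have hn : HasDerivAt (fun y : ℝ => (a+b)*y-2*a*b) (a+b) y := by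
      simpa using ((hasDerivAt_id y).const_mul (a+b)).sub_const (2*a*b)
    have hd : HasDerivAt (fun y : ℝ => (b-a)*y) (b-a) y := by
      simpa using (hasDerivAt_id y).const_mul (b-a)
    simpa [Pi.div_def] using hn.div hd (by positivity)
  have harc2 : HasDerivAt (fun y : ℝ => Real.arcsin (((a+b)*y-2*a*b)/((b-a)*y)))
      (1 / Real.sqrt (1 - (((a+b)*y-2*a*b)/((b-a)*y))^2) *
        (((a+b)*((b-a)*y) - ((a+b)*y-2*a*b)*(b-a)) / ((b-a)*y)^2)) y := by
    have := (Real.hasDerivAt_arcsin hv1 hv1').comp y hvd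
    simpa [Function.comp_def] using this
  have hrd : HasDerivAt (fun y : ℝ => Real.sqrt ((b-y)*(y-a)))
      (((-1)*(y-a)+(b-y)*1) / (2 * Real.sqrt ((b-y)*(y-a)))) y := by
    have hq : HasDerivAt (fun y : ℝ => (b-y)*(y-a)) ((-1)*(y-a)+(b-y)*1) y := by
      exact ((hasDerivAt_id y).const_sub b).mul ((hasDerivAt_id y).sub_const a)
    exact hq.sqrt (by nlinarith)
  have hgd : HasDerivAt (fun y : ℝ => (b-y)*(x-a)+(y-a)*(b-x)
        + 2*p*Real.sqrt ((b-y)*(y-a)))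
      ((-1)*(x-a) + 1*(b-x) + 2*p*(((-1)*(y-a)+(b-y)*1) / (2 * r))) y := by
    have h1 : HasDerivAt (fun y : ℝ => (b-y)*(x-a)) ((-1)*(x-a)) y :=
      ((hasDerivAt_id y).const_sub b).mul_const (x-a)
    have h2 : HasDerivAt (fun y : ℝ => (y-a)*(b-x)) (1*(b-x)) y :=
      ((hasDerivAt_id y).sub_const a).mul_const (b-x)
    exact (h1.add h2).add (hrd.const_mul (2*p))
  have hlog1 : HasDerivAt (fun y : ℝ => Real.log ((b-y)*(x-a)+(y-a)*(b-x)
        + 2*p*Real.sqrt ((b-y)*(y-a))))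
      (((-1)*(x-a) + 1*(b-x) + 2*p*(((-1)*(y-a)+(b-y)*1) / (2 * r))) /
        ((b-y)*(x-a)+(y-a)*(b-x) + 2*p*r)) y := hgd.log (by positivity)
  have hlog2 : HasDerivAt (fun y : ℝ => Real.log (y - x)) (1/(y-x)) y := by
    have h := ((hasDerivAt_id y).sub_const x).log (sub_ne_zero.2 hyx)
    simpa using h
  have htot := (harc1.sub (harc2.const_mul (s/x))).add
      ((hlog1.sub hlog2).const_mul (p/x))
  have heq : (1 / Real.sqrt (1 - ((2*y-a-b)/(b-a))^2) * (2/(b-a))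
      - s/x * (1 / Real.sqrt (1 - (((a+b)*y-2*a*b)/((b-a)*y))^2) *
        (((a+b)*((b-a)*y) - ((a+b)*y-2*a*b)*(b-a)) / ((b-a)*y)^2))
      + p/x * (((-1)*(x-a) + 1*(b-x) + 2*p*(((-1)*(y-a)+(b-y)*1) / (2 * r))) /
        ((b-y)*(x-a)+(y-a)*(b-x) + 2*p*r) - 1/(y-x)))
      = r / (y*(x-y)) := by
    have hA : (0:ℝ) < 2*r/(b-a) := div_pos (by linarith) (by linarith)
    have hB : (0:ℝ) < 2*s*r/((b-a)*y) :=
      div_pos (mul_pos (mul_pos two_pos hspos) hrpos) (mul_pos (by linarith) hy0)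
    rw [hu2, hv2, Real.sqrt_sq hA.le, Real.sqrt_sq hB.le]
    have hyx' : y - x ≠ 0 := sub_ne_zero.2 hyx
    have hxy' : x - y ≠ 0 := fun h => hyx' (by linarith [sub_eq_zero.1 h])
    field_simp
    have hg' : (x - a) * (b - y) + (b - x) * (y - a) + 2 * r * p ≠ 0 := ne_of_gt (by linarith)
    rw [show (r * (-(x - a) + (b - x)) + p * (-(y - a) + (b - y))) * (y - x) /
        ((x - a) * (b - y) + (b - x) * (y - a) + 2 * r * p) = r - p by
      rw [div_eq_iff hg']; linear_combination (-2*p)*hr2 + (2*r)*hp2]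
    linear_combination (-2*y*(x-y))*hp2 + (-2*x*(y-x))*hr2
  rw [heq] at htot
  exact htot

lemma pvH_lin_pos (a b x : ℝ) (hax : a < x) (hxb : x < b)
    (y : ℝ) (hay : a ≤ y) (hyb : y ≤ b) :
    0 < (b-y)*(x-a)+(y-a)*(b-x) := by
  nlinarith [mul_nonneg (sub_nonneg.2 hyb) (sub_pos.2 hax).le,
    mul_nonneg (sub_nonneg.2 hay) (sub_pos.2 hxb).le,
    mul_pos (sub_pos.2 hax) (sub_pos.2 hxb),
    mul_pos (sub_pos.2 (hax.trans hxb)) (sub_pos.2 hax),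
    mul_pos (sub_pos.2 (hax.trans hxb)) (sub_pos.2 hxb)]

lemma pvH_g_pos (a b x : ℝ) (hax : a < x) (hxb : x < b)
    (y : ℝ) (hay : a ≤ y) (hyb : y ≤ b) :
    0 < (b-y)*(x-a)+(y-a)*(b-x)
      + 2*Real.sqrt ((b-x)*(x-a))*Real.sqrt ((b-y)*(y-a)) := by
  have h1 := pvH_lin_pos a b x hax hxb y hay hyb
  have h2 : 0 ≤ 2*Real.sqrt ((b-x)*(x-a))*Real.sqrt ((b-y)*(y-a)) := by positivity
  linarith

lemma pvH_contOn (a b x : ℝ) (ha : 0 < a) (hax : a < x) (hxb : x < b) :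
    ContinuousOn (pvH a b x) (Set.Icc a b \ {x}) := by
  have hba : b - a ≠ 0 := by linarith
  apply ContinuousOn.add
  · apply ContinuousOn.sub
    · exact (Real.continuous_arcsin.comp (by fun_prop)).continuousOn
    · apply ContinuousOn.mul continuousOn_const
      apply Real.continuous_arcsin.comp_continuousOn
      apply ContinuousOn.div (by fun_prop) (by fun_prop)
      intro y hy
      have : 0 < y := lt_of_lt_of_le ha hy.1.1
      positivity
  · apply ContinuousOn.mul continuousOn_const
    apply ContinuousOn.sub
    · apply ContinuousOn.log (by fun_prop)
      intro y hy
      exact (pvH_g_pos a b x hax hxb y hy.1.1 hy.1.2).ne'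
    · apply ContinuousOn.log (by fun_prop)
      intro y hy
      exact sub_ne_zero.2 hy.2

lemma pvH_int1 (a b x : ℝ) (ha : 0 < a) (hax : a < x) (hxb : x < b)
    (ε : ℝ) (hε : 0 < ε) (hε' : ε < x - a) :
    (∫ y in a..(x - ε), Real.sqrt ((b - y) * (y - a)) / (y * (x - y)))
      = pvH a b x (x-ε) - pvH a b x a := by
  apply intervalIntegral.integral_eq_sub_of_hasDerivAt_of_le (by linarith)
  · apply (pvH_contOn a b x ha hax hxb).mono
    intro y hy
    exact ⟨⟨hy.1, by linarith [hy.2, hxb]⟩, by simp; linarith [hy.2]⟩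
  · intro y hy
    exact pvH_deriv a b x ha hax hxb y hy.1 (by linarith [hy.2, hxb]) (by linarith [hy.2])
  · apply ContinuousOn.intervalIntegrable
    rw [Set.uIcc_of_le (by linarith)]
    apply ContinuousOn.div (by fun_prop)
    · fun_prop
    · intro y hy
      have h1 : 0 < y := lt_of_lt_of_le ha hy.1
      have h2 : 0 < x - y := by linarith [hy.2]
      positivity

lemma pvH_int2 (a b x : ℝ) (ha : 0 < a) (hax : a < x) (hxb : x < b)
    (ε : ℝ) (hε : 0 < ε) (hε' : ε < b - x) :
    (∫ y in (x + ε)..b, Real.sqrt ((b - y) * (y - a)) / (y * (x - y)))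
      = pvH a b x b - pvH a b x (x+ε) := by
  refine intervalIntegral.integral_eq_sub_of_hasDerivAt_of_le (f := pvH a b x)
    (by linarith) ?_ ?_ ?_
  · apply (pvH_contOn a b x ha hax hxb).mono
    intro y hy
    exact ⟨⟨by linarith [hy.1, hax], hy.2⟩, by simp; linarith [hy.1]⟩
  · intro y hy
    exact pvH_deriv a b x ha hax hxb y (by linarith [hy.1]) hy.2 (by linarith [hy.1])
  · apply ContinuousOn.intervalIntegrable
    rw [Set.uIcc_of_le (by linarith)]
    apply ContinuousOn.div (by fun_prop)
    · fun_prop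
    · intro y hy
      have h1 : 0 < y := by linarith [hy.1, ha.trans hax]
      have h2 : y - x > 0 := by linarith [hy.1]
      have : x - y ≠ 0 := by intro h; nlinarith
      exact mul_ne_zero h1.ne' this

lemma pvH_at_b (a b x : ℝ) (ha : 0 < a) (hax : a < x) (hxb : x < b) :
    pvH a b x b = π/2 - Real.sqrt (a*b)/x*(π/2)
      + Real.sqrt ((b-x)*(x-a))/x * Real.log (b-a) := by
  have hab : a < b := hax.trans hxb
  have hba : b - a ≠ 0 := by linarith
  have hb0 : (0:ℝ) < b := by linarith
  have hbx : b - x ≠ 0 := by linarith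
  simp only [pvH]
  rw [show 2*b-a-b = b-a by ring, div_self hba, Real.arcsin_one]
  rw [show ((a+b)*b-2*a*b)/((b-a)*b) = 1 by
    rw [div_eq_iff (mul_ne_zero hba hb0.ne')]; ring, Real.arcsin_one]
  rw [show (b-b)*(b-a) = (0:ℝ) by ring, Real.sqrt_zero, mul_zero, add_zero,
    show (b-b)*(x-a) = (0:ℝ) by ring, zero_add]
  rw [Real.log_mul hba hbx, add_sub_cancel_right]

lemma pvH_at_a (a b x : ℝ) (ha : 0 < a) (hax : a < x) (hxb : x < b) :
    pvH a b x a = -(π/2) - Real.sqrt (a*b)/x*(-(π/2))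
      + Real.sqrt ((b-x)*(x-a))/x * Real.log (b-a) := by
  have hab : a < b := hax.trans hxb
  have hba : b - a ≠ 0 := by linarith
  have hxa : x - a ≠ 0 := by linarith
  simp only [pvH]
  rw [show 2*a-a-b = -(b-a) by ring, neg_div, div_self hba, Real.arcsin_neg_one]
  rw [show ((a+b)*a-2*a*b)/((b-a)*a) = -1 by
    rw [div_eq_iff (mul_ne_zero hba ha.ne')]; ring, Real.arcsin_neg_one]
  rw [show (b-a)*(a-a) = (0:ℝ) by ring, Real.sqrt_zero, mul_zero, add_zero,
    show (a-a)*(b-x) = (0:ℝ) by ring, add_zero]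
  rw [show a - x = -(x-a) by ring, Real.log_neg_eq_log,
    Real.log_mul hba hxa, add_sub_cancel_right]


/-- For `0 < a < b` and `x ∈ (a,b)`, the principal value integral
`⨍_a^b (1/y)√((b-y)(y-a))/(x-y) dy = π(1 - √(ab)/x)`. -/
theorem pv_integral_eval (a b x : ℝ) (ha : 0 < a) (hab : a < b) (hx : x ∈ Set.Ioo a b) :
    Filter.Tendsto
      (fun ε : ℝ =>
        (∫ y in a..(x - ε), Real.sqrt ((b - y) * (y - a)) / (y * (x - y)))
          + ∫ y in (x + ε)..b, Real.sqrt ((b - y) * (y - a)) / (y * (x - y)))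
      (nhdsWithin 0 (Set.Ioi 0))
      (nhds (π * (1 - Real.sqrt (a * b) / x))) := by
  obtain ⟨hax, hxb⟩ := hx
  have hx0 : (0:ℝ) < x := ha.trans hax
  have hba : b - a ≠ 0 := by linarith
  set K : ℝ → ℝ := fun y =>
    Real.arcsin ((2*y-a-b)/(b-a))
    - Real.sqrt (a*b)/x * Real.arcsin (((a+b)*y-2*a*b)/((b-a)*y))
    + Real.sqrt ((b-x)*(x-a))/x *
        Real.log ((b-y)*(x-a)+(y-a)*(b-x)
          + 2*Real.sqrt ((b-x)*(x-a))*Real.sqrt ((b-y)*(y-a))) with hK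
  have hsplit : ∀ y, pvH a b x y
      = K y - Real.sqrt ((b-x)*(x-a))/x * Real.log (y-x) := by
    intro y; simp only [pvH, hK]; ring
  have hKcont : ContinuousAt K x := by
    rw [hK]
    apply ContinuousAt.add
    · apply ContinuousAt.sub
      · exact Real.continuous_arcsin.continuousAt.comp (by fun_prop)
      · apply ContinuousAt.mul continuousAt_const
        apply Real.continuous_arcsin.continuousAt.comp
        exact ContinuousAt.div (by fun_prop) (by fun_prop)
          (by positivity)
    · apply ContinuousAt.mul continuousAt_const
      apply ContinuousAt.log (by fun_prop)
      exact (pvH_g_pos a b x hax hxb x hax.le hxb.le).ne'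
  have htend1 : Tendsto (fun ε : ℝ => x - ε) (nhdsWithin 0 (Set.Ioi 0)) (nhds x) := by
    have h : Tendsto (fun ε : ℝ => x - ε) (nhds 0) (nhds (x - 0)) :=
      tendsto_const_nhds.sub tendsto_id
    rw [sub_zero] at h
    exact h.mono_left nhdsWithin_le_nhds
  have htend2 : Tendsto (fun ε : ℝ => x + ε) (nhdsWithin 0 (Set.Ioi 0)) (nhds x) := by
    have h : Tendsto (fun ε : ℝ => x + ε) (nhds 0) (nhds (x + 0)) :=
      tendsto_const_nhds.add tendsto_id
    rw [add_zero] at h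
    exact h.mono_left nhdsWithin_le_nhds
  have hdiff : Tendsto (fun ε : ℝ => K (x-ε) - K (x+ε))
      (nhdsWithin 0 (Set.Ioi 0)) (nhds 0) := by
    have := (hKcont.tendsto.comp htend1).sub (hKcont.tendsto.comp htend2)
    rwa [sub_self] at this
  have main := hdiff.add
    (tendsto_const_nhds (x := pvH a b x b - pvH a b x a)
      (f := nhdsWithin (0:ℝ) (Set.Ioi 0)))
  have hval : (0:ℝ) + (pvH a b x b - pvH a b x a)
      = π * (1 - Real.sqrt (a*b)/x) := by
    rw [pvH_at_b a b x ha hax hxb, pvH_at_a a b x ha hax hxb]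
    ring
  rw [hval] at main
  apply main.congr'
  have hmin : (0:ℝ) < min (x-a) (b-x) := lt_min (by linarith) (by linarith)
  filter_upwards [Ioo_mem_nhdsGT hmin] with ε hε
  have hε1 : 0 < ε := hε.1
  have hε2 : ε < x - a := lt_of_lt_of_le hε.2 (min_le_left _ _)
  have hε3 : ε < b - x := lt_of_lt_of_le hε.2 (min_le_right _ _)
  rw [pvH_int1 a b x ha hax hxb ε hε1 hε2, pvH_int2 a b x ha hax hxb ε hε1 hε3,
    hsplit (x-ε), hsplit (x+ε),
    show x - ε - x = -ε by ring, show x + ε - x = ε by ring, Real.log_neg_eq_log]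
  ring
end

section
/- For real b > a > 0 and t ∈ ℝ, ∫_a^b (t log x / x) √((x−a)/(b−x)) dx = 2πt [ log((√a + √b)/2) + (√a/√b) log((√a + √b)/(2√(ab))) ]. -/
open Real MeasureTheory Set

lemma wpos {r : ℝ} (hr : |r| < 1) (θ : ℝ) : 0 < 1 + r^2 - 2*r*Real.cos θ := by
  have h1 : r * Real.cos θ ≤ |r| := by
    calc r * Real.cos θ ≤ |r * Real.cos θ| := le_abs_self _
    _ = |r| * |Real.cos θ| := abs_mul _ _
    _ ≤ |r| * 1 := by gcongr; exact Real.abs_cos_le_one θ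
    _ = |r| := mul_one _
  nlinarith [sq_abs r, abs_nonneg r]

lemma hasSum_aux {r : ℝ} (hr : |r| < 1) (θ : ℝ) :
    HasSum (fun n : ℕ => r^n * Real.cos (n*θ) / n)
      (-(1/2) * Real.log (1 + r^2 - 2*r*Real.cos θ)) := by
  have hz : ‖(r : ℂ) * Complex.exp (θ * Complex.I)‖ < 1 := by
    simpa [Complex.norm_exp] using hr
  have h := Complex.hasSum_taylorSeries_neg_log hz
  have h2 := Complex.hasSum_re h
  convert h2 using 2 with n
  · -- term equality
    rw [mul_pow, ← Complex.exp_nat_mul,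
      show ((n : ℂ)) * ((θ : ℂ) * Complex.I) = ((n * θ : ℝ) : ℂ) * Complex.I by push_cast; ring,
      show ((r : ℂ)^n) = ((r^n : ℝ) : ℂ) by push_cast; ring,
      Complex.div_natCast_re, Complex.re_ofReal_mul, Complex.exp_ofReal_mul_I_re]
  · -- sum equality
    rw [Complex.neg_re, Complex.log_re]
    have habs : (‖1 - (r : ℂ) * Complex.exp (θ * Complex.I)‖)^2
        = 1 + r^2 - 2*r*Real.cos θ := by
      rw [← Complex.normSq_eq_norm_sq, Complex.normSq_apply]
      simp only [Complex.sub_re, Complex.sub_im, Complex.one_re, Complex.one_im,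
        Complex.re_ofReal_mul, Complex.im_ofReal_mul, Complex.exp_ofReal_mul_I_re,
        Complex.exp_ofReal_mul_I_im]
      nlinarith [Real.sin_sq_add_cos_sq θ]
    rw [← habs, Real.log_pow]
    push_cast
    ring

lemma integral_log_w {r : ℝ} (hr : |r| < 1) :
    ∫ θ in Ioo (0:ℝ) π, Real.log (1 + r^2 - 2*r*Real.cos θ) = 0 := by
  have key : ∀ θ : ℝ, Real.log (1 + r^2 - 2*r*Real.cos θ)
      = -2 * ∑' n : ℕ, r^n * Real.cos (n*θ) / n := by
    intro θ
    rw [(hasSum_aux hr θ).tsum_eq]; ring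
  simp_rw [key]
  rw [integral_const_mul]
  have hcont : ∀ n : ℕ, Continuous fun θ : ℝ => r^n * Real.cos (n*θ) / n := by
    intro n
    continuity
  have hint : ∀ n : ℕ, Integrable (fun θ : ℝ => r^n * Real.cos (n*θ) / n)
      (volume.restrict (Ioo (0:ℝ) π)) := by
    intro n
    exact ((hcont n).integrableOn_Icc (a := 0) (b := π)).mono_set Ioo_subset_Icc_self
  have hbound : ∀ n : ℕ, (∫ θ in Ioo (0:ℝ) π, ‖r^n * Real.cos (n*θ) / n‖) ≤ π * |r|^n := by
    intro n
    calc (∫ θ in Ioo (0:ℝ) π, ‖r^n * Real.cos (n*θ) / n‖)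
        ≤ ∫ _ in Ioo (0:ℝ) π, |r|^n := by
          apply setIntegral_mono_on (hint n).norm
            (integrableOn_const measure_Ioo_lt_top.ne) measurableSet_Ioo
          intro θ _
          rcases Nat.eq_zero_or_pos n with h0 | hn
          · simp [h0]
          · rw [norm_div, norm_mul, norm_pow, Real.norm_eq_abs, Real.norm_eq_abs,
              Real.norm_eq_abs]
            have h1 : |r|^n * |Real.cos (n*θ)| ≤ |r|^n :=
              mul_le_of_le_one_right (by positivity) (Real.abs_cos_le_one _)
            have h2 : |r|^n * |Real.cos (n*θ)| / |(n:ℝ)| ≤ |r|^n * |Real.cos (n*θ)| :=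
              div_le_self (by positivity) (by rw [Nat.abs_cast]; exact Nat.one_le_cast.2 hn)
            linarith
      _ = π * |r|^n := by
          rw [setIntegral_const]
          simp [Real.volume_Ioo, ENNReal.toReal_ofReal Real.pi_pos.le, Real.pi_pos.le]
  have hsum : Summable fun n : ℕ => ∫ θ in Ioo (0:ℝ) π, ‖r^n * Real.cos (n*θ) / n‖ := by
    apply Summable.of_nonneg_of_le (fun n => integral_nonneg (fun θ => norm_nonneg _)) hbound
    exact (summable_geometric_of_lt_one (abs_nonneg r) hr).mul_left π
  rw [← MeasureTheory.integral_tsum_of_summable_integral_norm hint hsum]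
  have hzero : ∀ n : ℕ, (∫ θ in Ioo (0:ℝ) π, r^n * Real.cos (n*θ) / n) = 0 := by
    intro n
    rcases Nat.eq_zero_or_pos n with h0 | hn
    · simp [h0]
    have hne : (n : ℝ) ≠ 0 := Nat.cast_ne_zero.2 hn.ne'
    rw [← MeasureTheory.integral_Ioc_eq_integral_Ioo,
      ← intervalIntegral.integral_of_le Real.pi_pos.le]
    have heq : (fun θ : ℝ => r^n * Real.cos (n*θ) / n) = fun θ => (r^n/n) * Real.cos (n*θ) :=
      funext fun θ => by ring
    rw [heq, intervalIntegral.integral_const_mul,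
      intervalIntegral.integral_comp_mul_left (fun x => Real.cos x) hne,
      integral_cos]
    simp [Real.sin_nat_mul_pi]
  simp [hzero]

variable {a b : ℝ}

/-- The substitution x = (a+b)/2 - ((b-a)/2) cos θ. -/
lemma subst_cos (ha : 0 < a) (hab : a < b) (g : ℝ → ℝ) :
    ∫ x in Ioo a b, g x
      = ∫ θ in Ioo (0:ℝ) π, ((b-a)/2 * Real.sin θ) * g ((a+b)/2 - (b-a)/2 * Real.cos θ) := by
  set p : ℝ := (a+b)/2 with hp
  set q : ℝ := (b-a)/2 with hq
  have hq0 : 0 < q := by simp [hq]; linarith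
  set f : ℝ → ℝ := fun θ => p - q * Real.cos θ with hf
  have hmono : StrictMonoOn f (Icc 0 π) := by
    intro x hx y hy hxy
    have := Real.strictAntiOn_cos hx hy hxy
    simp only [hf]
    nlinarith
  have hinj : InjOn f (Ioo 0 π) := (hmono.injOn).mono Ioo_subset_Icc_self
  have himg : f '' Ioo 0 π = Ioo a b := by
    apply Subset.antisymm
    · rintro _ ⟨θ, hθ, rfl⟩
      have h1 : Real.cos θ < 1 := by
        have := Real.strictAntiOn_cos (left_mem_Icc.2 Real.pi_pos.le)
          (Ioo_subset_Icc_self hθ) hθ.1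
        simpa using this
      have h2 : -1 < Real.cos θ := by
        have := Real.strictAntiOn_cos (Ioo_subset_Icc_self hθ)
          (right_mem_Icc.2 Real.pi_pos.le) hθ.2
        simpa using this
      constructor
      · simp only [hf, hp, hq]; nlinarith
      · simp only [hf, hp, hq]; nlinarith
    · rintro x hx
      have ht1 : -1 < (p - x)/q := by
        rw [lt_div_iff₀ hq0]
        simp only [hp, hq]
        nlinarith [hx.2]
      have ht2 : (p - x)/q < 1 := by
        rw [div_lt_iff₀ hq0]
        simp only [hp, hq]
        nlinarith [hx.1]
      refine ⟨Real.arccos ((p - x)/q), ⟨Real.arccos_pos.2 ht2, ?_⟩, ?_⟩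
      · exact lt_of_le_of_ne (Real.arccos_le_pi _)
          (fun h => absurd (Real.arccos_eq_pi.1 h) (by linarith))
      · simp only [hf]
        rw [Real.cos_arccos ht1.le ht2.le]
        field_simp
        ring
  have hderiv : ∀ θ ∈ Ioo (0:ℝ) π, HasDerivWithinAt f (q * Real.sin θ) (Ioo 0 π) θ := by
    intro θ _
    have : HasDerivAt f (q * Real.sin θ) θ := by
      simpa using ((Real.hasDerivAt_cos θ).const_mul q).const_sub p
    exact this.hasDerivWithinAt
  rw [← himg, integral_image_eq_integral_abs_deriv_smul measurableSet_Ioo hderiv hinj g]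
  apply setIntegral_congr_fun measurableSet_Ioo
  intro θ hθ
  have hs : 0 < Real.sin θ := Real.sin_pos_of_pos_of_lt_pi hθ.1 hθ.2
  simp only [smul_eq_mul]
  rw [abs_of_pos (by positivity)]

/-- Integrability transfer through the substitution. -/
lemma subst_cos_integrable (ha : 0 < a) (hab : a < b) (g : ℝ → ℝ)
    (h : IntegrableOn (fun θ => ((b-a)/2 * Real.sin θ) * g ((a+b)/2 - (b-a)/2 * Real.cos θ))
      (Ioo (0:ℝ) π)) : IntegrableOn g (Ioo a b) := by
  set p : ℝ := (a+b)/2 with hp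
  set q : ℝ := (b-a)/2 with hq
  have hq0 : 0 < q := by simp [hq]; linarith
  set f : ℝ → ℝ := fun θ => p - q * Real.cos θ with hf
  have hmono : StrictMonoOn f (Icc 0 π) := by
    intro x hx y hy hxy
    have := Real.strictAntiOn_cos hx hy hxy
    simp only [hf]
    nlinarith
  have hinj : InjOn f (Ioo 0 π) := (hmono.injOn).mono Ioo_subset_Icc_self
  have himg : f '' Ioo 0 π = Ioo a b := by
    apply Subset.antisymm
    · rintro _ ⟨θ, hθ, rfl⟩
      have h1 : Real.cos θ < 1 := by
        have := Real.strictAntiOn_cos (left_mem_Icc.2 Real.pi_pos.le)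
          (Ioo_subset_Icc_self hθ) hθ.1
        simpa using this
      have h2 : -1 < Real.cos θ := by
        have := Real.strictAntiOn_cos (Ioo_subset_Icc_self hθ)
          (right_mem_Icc.2 Real.pi_pos.le) hθ.2
        simpa using this
      constructor
      · simp only [hf, hp, hq]; nlinarith
      · simp only [hf, hp, hq]; nlinarith
    · rintro x hx
      have ht1 : -1 < (p - x)/q := by
        rw [lt_div_iff₀ hq0]
        simp only [hp, hq]
        nlinarith [hx.2]
      have ht2 : (p - x)/q < 1 := by
        rw [div_lt_iff₀ hq0]
        simp only [hp, hq]
        nlinarith [hx.1]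
      refine ⟨Real.arccos ((p - x)/q), ⟨Real.arccos_pos.2 ht2, ?_⟩, ?_⟩
      · exact lt_of_le_of_ne (Real.arccos_le_pi _)
          (fun h => absurd (Real.arccos_eq_pi.1 h) (by linarith))
      · simp only [hf]
        rw [Real.cos_arccos ht1.le ht2.le]
        field_simp
        ring
  have hderiv : ∀ θ ∈ Ioo (0:ℝ) π, HasDerivWithinAt f (q * Real.sin θ) (Ioo 0 π) θ := by
    intro θ _
    have : HasDerivAt f (q * Real.sin θ) θ := by
      simpa using ((Real.hasDerivAt_cos θ).const_mul q).const_sub p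
    exact this.hasDerivWithinAt
  rw [← himg]
  rw [integrableOn_image_iff_integrableOn_abs_deriv_smul measurableSet_Ioo hderiv hinj g]
  apply h.congr_fun _ measurableSet_Ioo
  intro θ hθ
  have hs : 0 < Real.sin θ := Real.sin_pos_of_pos_of_lt_pi hθ.1 hθ.2
  simp only [smul_eq_mul]
  rw [abs_of_pos (by positivity)]

variable {a b : ℝ}

section
variable (ha : 0 < a) (hab : a < b)
include ha hab

lemma sqrt_prod_eq (θ : ℝ) (hθ : θ ∈ Ioo (0:ℝ) π) :
    Real.sqrt ((((a+b)/2 - (b-a)/2 * Real.cos θ) - a) * (b - ((a+b)/2 - (b-a)/2 * Real.cos θ)))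
      = (b-a)/2 * Real.sin θ := by
  have hs : 0 < Real.sin θ := Real.sin_pos_of_pos_of_lt_pi hθ.1 hθ.2
  have hq : 0 < (b-a)/2 := by linarith
  have key : (((a+b)/2 - (b-a)/2 * Real.cos θ) - a) * (b - ((a+b)/2 - (b-a)/2 * Real.cos θ))
      = ((b-a)/2 * Real.sin θ)^2 := by
    have h := Real.sin_sq_add_cos_sq θ
    have hsin : Real.sin θ ^ 2 = 1 - Real.cos θ ^ 2 := by linarith
    calc (((a+b)/2 - (b-a)/2 * Real.cos θ) - a) * (b - ((a+b)/2 - (b-a)/2 * Real.cos θ))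
        = ((b-a)/2)^2 * (1 - Real.cos θ^2) := by ring
      _ = ((b-a)/2)^2 * Real.sin θ^2 := by rw [hsin]
      _ = ((b-a)/2 * Real.sin θ)^2 := by ring
  rw [key, Real.sqrt_sq (by positivity)]

lemma fpos (θ : ℝ) : 0 < (a+b)/2 - (b-a)/2 * Real.cos θ := by
  nlinarith [Real.neg_one_le_cos θ, Real.cos_le_one θ]

/-- The value of log(p - q cos θ) via the series identity. -/
lemma integral_log_f :
    ∫ θ in Ioo (0:ℝ) π, Real.log ((a+b)/2 - (b-a)/2 * Real.cos θ)
      = 2 * π * Real.log ((Real.sqrt a + Real.sqrt b)/2) := by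
  set α := Real.sqrt a with hα
  set β := Real.sqrt b with hβ
  have hα0 : 0 < α := Real.sqrt_pos.2 ha
  have hβ0 : 0 < β := Real.sqrt_pos.2 (ha.trans hab)
  have hαβ : α < β := Real.sqrt_lt_sqrt ha.le hab
  have ha' : α^2 = a := Real.sq_sqrt ha.le
  have hb' : β^2 = b := Real.sq_sqrt (ha.trans hab).le
  set r : ℝ := (β - α)/(β + α) with hr
  have hr0 : 0 ≤ r := div_nonneg (by linarith) (by positivity)
  have hr1 : |r| < 1 := by
    rw [abs_of_nonneg hr0, hr, div_lt_one (by positivity)]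
    linarith
  set c : ℝ := (α + β)/2 with hc
  have hc0 : 0 < c := by positivity
  have key : ∀ θ : ℝ, (a+b)/2 - (b-a)/2 * Real.cos θ = c^2 * (1 + r^2 - 2*r*Real.cos θ) := by
    intro θ
    have hne : β + α ≠ 0 := by positivity
    rw [← ha', ← hb', hc, hr]
    field_simp
    ring
  have logkey : ∀ θ : ℝ, Real.log ((a+b)/2 - (b-a)/2 * Real.cos θ)
      = 2 * Real.log c + Real.log (1 + r^2 - 2*r*Real.cos θ) := by
    intro θ
    rw [key θ, Real.log_mul (by positivity) (wpos hr1 θ).ne', Real.log_pow]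
    push_cast; ring
  simp_rw [logkey]
  rw [integral_add (show IntegrableOn (fun _ : ℝ => 2 * Real.log c) (Ioo 0 π) volume from
      integrableOn_const measure_Ioo_lt_top.ne), integral_log_w hr1,
    setIntegral_const]
  · simp [Real.volume_Ioo, ENNReal.toReal_ofReal Real.pi_pos.le, hc, Real.pi_pos.le]
    ring
  · have hcont : ContinuousOn (fun θ : ℝ => Real.log (1 + r^2 - 2*r*Real.cos θ)) (Icc 0 π) := by
      apply Real.continuousOn_log.comp
        (Continuous.continuousOn (by continuity))
      intro θ _
      simpa using (wpos hr1 θ).ne'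
    exact (hcont.integrableOn_compact isCompact_Icc).mono_set Ioo_subset_Icc_self
end

variable {a b : ℝ}

section
variable (ha : 0 < a) (hab : a < b)
include ha hab

-- the composed integrand equals h ∘ f for nice h, on Ioo 0 π
private lemma composed_eq (h : ℝ → ℝ) :
    EqOn (fun θ => ((b-a)/2 * Real.sin θ) *
        ((fun x => h x / Real.sqrt ((x-a)*(b-x))) ((a+b)/2 - (b-a)/2 * Real.cos θ)))
      (fun θ => h ((a+b)/2 - (b-a)/2 * Real.cos θ)) (Ioo (0:ℝ) π) := by
  intro θ hθ
  have hs : 0 < Real.sin θ := Real.sin_pos_of_pos_of_lt_pi hθ.1 hθ.2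
  have hq : 0 < (b-a)/2 := by linarith
  simp only
  rw [sqrt_prod_eq ha hab θ hθ]
  have h1 : Real.sin θ ≠ 0 := hs.ne'
  have h2 : b - a ≠ 0 := by linarith
  field_simp

lemma integral_sqrt_weight (h : ℝ → ℝ)
    (hcont : ContinuousOn (fun x => h x) (Icc a b)) :
    (∫ x in Ioo a b, h x / Real.sqrt ((x-a)*(b-x)))
      = ∫ θ in Ioo (0:ℝ) π, h ((a+b)/2 - (b-a)/2 * Real.cos θ) := by
  rw [subst_cos ha hab]
  exact setIntegral_congr_fun measurableSet_Ioo (composed_eq ha hab h)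

lemma mem_Icc_f (θ : ℝ) : (a+b)/2 - (b-a)/2 * Real.cos θ ∈ Icc a b := by
  constructor
  · nlinarith [Real.cos_le_one θ]
  · nlinarith [Real.neg_one_le_cos θ]

lemma integrable_sqrt_weight (h : ℝ → ℝ)
    (hcont : ContinuousOn (fun x => h x) (Icc a b)) :
    IntegrableOn (fun x => h x / Real.sqrt ((x-a)*(b-x))) (Ioo a b) := by
  apply subst_cos_integrable ha hab
  apply IntegrableOn.congr_fun _ (composed_eq ha hab h).symm measurableSet_Ioo
  have : ContinuousOn (fun θ : ℝ => h ((a+b)/2 - (b-a)/2 * Real.cos θ)) (Icc 0 π) := by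
    apply hcont.comp (Continuous.continuousOn (by continuity))
    intro θ _
    exact mem_Icc_f ha hab θ
  exact (this.integrableOn_compact isCompact_Icc).mono_set Ioo_subset_Icc_self

/-- K -/
lemma integral_K :
    (∫ x in Ioo a b, Real.log x / Real.sqrt ((x-a)*(b-x)))
      = 2 * π * Real.log ((Real.sqrt a + Real.sqrt b)/2) := by
  rw [integral_sqrt_weight ha hab Real.log
    (Real.continuousOn_log.mono (fun x hx => by simp; intro h; subst h; exact absurd hx.1 (by simpa using ha)))]
  exact integral_log_f ha hab

/-- P -/
lemma integral_P :
    (∫ x in Ioo a b, 1 / Real.sqrt ((x-a)*(b-x))) = π := by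
  rw [integral_sqrt_weight ha hab (fun _ => 1) continuousOn_const]
  simp [Real.volume_Ioo, ENNReal.toReal_ofReal Real.pi_pos.le, Real.pi_pos.le]

end

variable {a b : ℝ}

section
variable (ha : 0 < a) (hab : a < b)
include ha hab

lemma contOn_log : ContinuousOn Real.log (Icc a b) :=
  Real.continuousOn_log.mono (fun x hx => by
    simp only [mem_compl_iff, mem_singleton_iff]
    intro h; rw [h] at hx; exact absurd hx.1 (by simpa using ha))

lemma inv_subst (g : ℝ → ℝ) :
    ∫ x in Ioo a b, g x = ∫ u in Ioo a b, (a*b/u^2) * g (a*b/u) := by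
  have hb0 : 0 < b := ha.trans hab
  set f : ℝ → ℝ := fun u => a*b/u with hf
  have himg : f '' Ioo a b = Ioo a b := by
    apply Subset.antisymm
    · rintro _ ⟨u, hu, rfl⟩
      have hu0 : 0 < u := ha.trans hu.1
      constructor
      · rw [lt_div_iff₀ hu0]; nlinarith [hu.2]
      · rw [div_lt_iff₀ hu0]; nlinarith [hu.1]
    · rintro x hx
      have hx0 : 0 < x := ha.trans hx.1
      refine ⟨a*b/x, ⟨?_, ?_⟩, ?_⟩
      · rw [lt_div_iff₀ hx0]; nlinarith [hx.2]
      · rw [div_lt_iff₀ hx0]; nlinarith [hx.1]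
      · simp only [hf]
        field_simp
    
  have hinj : InjOn f (Ioo a b) := by
    intro u hu v hv h
    have hu0 : (0:ℝ) < u := ha.trans hu.1
    have hv0 : (0:ℝ) < v := ha.trans hv.1
    have hab0 : (0:ℝ) < a*b := by positivity
    simp only [hf] at h
    rw [div_eq_div_iff hu0.ne' hv0.ne'] at h
    exact (mul_left_cancel₀ hab0.ne' h).symm
  have hderiv : ∀ u ∈ Ioo a b, HasDerivWithinAt f (-(a*b)/u^2) (Ioo a b) u := by
    intro u hu
    have hu0 : u ≠ 0 := (ha.trans hu.1).ne'
    have : HasDerivAt f (a*b * (-(u^2)⁻¹)) u := by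
      simpa [hf, div_eq_mul_inv] using (hasDerivAt_inv hu0).const_mul (a*b)
    rw [show -(a*b)/u^2 = a*b * -(u^2)⁻¹ by ring]
    exact this.hasDerivWithinAt
  nth_rewrite 1 [← himg]
  rw [integral_image_eq_integral_abs_deriv_smul measurableSet_Ioo hderiv hinj g]
  apply setIntegral_congr_fun measurableSet_Ioo
  intro u hu
  have hu0 : (0:ℝ) < u := ha.trans hu.1
  simp only [smul_eq_mul, hf]
  rw [show -(a*b)/u^2 = -(a*b/u^2) by ring, abs_neg,
    abs_of_pos (by positivity : (0:ℝ) < a*b/u^2)]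

end

section
variable (ha : 0 < a) (hab : a < b)
include ha hab

lemma integral_J :
    (∫ x in Ioo a b, (Real.log x / x) / Real.sqrt ((x-a)*(b-x)))
      = (Real.log (a*b) * π - 2 * π * Real.log ((Real.sqrt a + Real.sqrt b)/2))
          / Real.sqrt (a*b) := by
  have hb0 : 0 < b := ha.trans hab
  have hab0 : (0:ℝ) < a*b := by positivity
  have hsab : (0:ℝ) < Real.sqrt (a*b) := Real.sqrt_pos.2 hab0
  rw [inv_subst ha hab]
  have key : EqOn
      (fun u => (a*b/u^2) * ((fun x => (Real.log x / x) / Real.sqrt ((x-a)*(b-x))) (a*b/u)))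
      (fun u => (Real.log (a*b)/Real.sqrt (a*b)) * (1/Real.sqrt ((u-a)*(b-u)))
        - (1/Real.sqrt (a*b)) * (Real.log u/Real.sqrt ((u-a)*(b-u)))) (Ioo a b) := by
    intro u hu
    have hu0 : (0:ℝ) < u := ha.trans hu.1
    have hD : (0:ℝ) < (u-a)*(b-u) := mul_pos (by linarith [hu.1]) (by linarith [hu.2])
    have hsD : (0:ℝ) < Real.sqrt ((u-a)*(b-u)) := Real.sqrt_pos.2 hD
    have hDeq : ((a*b/u-a)*(b-a*b/u)) = (a*b*((u-a)*(b-u)))/u^2 := by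
      field_simp
    have hsq : Real.sqrt ((a*b/u-a)*(b-a*b/u))
        = Real.sqrt (a*b) * Real.sqrt ((u-a)*(b-u)) / u := by
      rw [hDeq, show (a*b*((u-a)*(b-u)))/u^2
          = (Real.sqrt (a*b) * Real.sqrt ((u-a)*(b-u)) / u)^2 by
            rw [div_pow, mul_pow, Real.sq_sqrt hab0.le, Real.sq_sqrt hD.le],
        Real.sqrt_sq (by positivity)]
    have hlog : Real.log (a*b/u) = Real.log (a*b) - Real.log u :=
      Real.log_div hab0.ne' hu0.ne'
    simp only
    rw [hsq, hlog]
    field_simp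
  rw [setIntegral_congr_fun measurableSet_Ioo key]
  have h1 : IntegrableOn (fun u => (1:ℝ)/Real.sqrt ((u-a)*(b-u))) (Ioo a b) :=
    integrable_sqrt_weight ha hab (fun _ => 1) continuousOn_const
  have h2 : IntegrableOn (fun u => Real.log u/Real.sqrt ((u-a)*(b-u))) (Ioo a b) :=
    integrable_sqrt_weight ha hab Real.log (contOn_log ha hab)
  rw [integral_sub (h1.const_mul _) (h2.const_mul _), integral_const_mul, integral_const_mul,
    integral_P ha hab, integral_K ha hab]
  field_simp
end

/-- `∫_a^b (t log x / x) √((x-a)/(b-x)) dx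
  = 2πt [log((√a+√b)/2) + (√a/√b) log((√a+√b)/(2√(ab)))]` for `0 < a < b`. -/
theorem log_weight_integral_x (a b t : ℝ) (ha : 0 < a) (hab : a < b) :
    (∫ x in a..b, t * Real.log x / x * Real.sqrt ((x - a) / (b - x)))
      = 2 * π * t *
          (Real.log ((Real.sqrt a + Real.sqrt b) / 2)
            + Real.sqrt a / Real.sqrt b *
                Real.log ((Real.sqrt a + Real.sqrt b) / (2 * Real.sqrt (a * b)))) := by
  have hb0 : 0 < b := ha.trans hab
  have hab0 : (0:ℝ) < a*b := by positivity
  have hsa : (0:ℝ) < Real.sqrt a := Real.sqrt_pos.2 ha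
  have hsb : (0:ℝ) < Real.sqrt b := Real.sqrt_pos.2 hb0
  have hsab : (0:ℝ) < Real.sqrt (a*b) := Real.sqrt_pos.2 hab0
  rw [intervalIntegral.integral_of_le hab.le, MeasureTheory.integral_Ioc_eq_integral_Ioo]
  have key : EqOn (fun x => t * Real.log x / x * Real.sqrt ((x - a) / (b - x)))
      (fun x => t * (Real.log x / Real.sqrt ((x-a)*(b-x)))
        - (t*a) * ((Real.log x / x) / Real.sqrt ((x-a)*(b-x)))) (Ioo a b) := by
    intro x hx
    have hx0 : (0:ℝ) < x := ha.trans hx.1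
    have hxa : (0:ℝ) < x - a := by linarith [hx.1]
    have hbx : (0:ℝ) < b - x := by linarith [hx.2]
    have hs1 : (0:ℝ) < Real.sqrt (x-a) := Real.sqrt_pos.2 hxa
    have hs2 : (0:ℝ) < Real.sqrt (b-x) := Real.sqrt_pos.2 hbx
    have hsq : Real.sqrt (x-a) ^ 2 = x - a := Real.sq_sqrt hxa.le
    have h1 : Real.sqrt ((x-a)/(b-x)) = Real.sqrt (x-a)/Real.sqrt (b-x) :=
      Real.sqrt_div hxa.le _
    have h2 : Real.sqrt ((x-a)*(b-x)) = Real.sqrt (x-a)*Real.sqrt (b-x) :=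
      Real.sqrt_mul hxa.le _
    simp only
    rw [h1, h2]
    field_simp
    generalize Real.sqrt (x-a) = s at hsq ⊢
    rw [show a = x - s^2 by linarith]
    ring
  rw [setIntegral_congr_fun measurableSet_Ioo key]
  have h1 : IntegrableOn (fun x => Real.log x/Real.sqrt ((x-a)*(b-x))) (Ioo a b) :=
    integrable_sqrt_weight ha hab Real.log (contOn_log ha hab)
  have h2 : IntegrableOn (fun x => (Real.log x / x)/Real.sqrt ((x-a)*(b-x))) (Ioo a b) :=
    integrable_sqrt_weight ha hab (fun x => Real.log x / x)
      ((contOn_log ha hab).div (continuousOn_id) (fun x hx => (ha.trans_le hx.1).ne'))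
  rw [integral_sub (h1.const_mul t) (h2.const_mul (t*a)), integral_const_mul, integral_const_mul,
    integral_K ha hab, integral_J ha hab]
  -- now pure algebra
  have hkey : a / Real.sqrt (a*b) = Real.sqrt a / Real.sqrt b := by
    rw [Real.sqrt_mul ha.le]
    rw [div_eq_div_iff (by positivity) hsb.ne']
    nlinarith [Real.sq_sqrt ha.le]
  have hlog1 : Real.log ((Real.sqrt a + Real.sqrt b) / (2 * Real.sqrt (a*b)))
      = Real.log ((Real.sqrt a + Real.sqrt b)/2) - Real.log (a*b) / 2 := by
    rw [show (Real.sqrt a + Real.sqrt b) / (2 * Real.sqrt (a*b))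
        = ((Real.sqrt a + Real.sqrt b)/2) / Real.sqrt (a*b) by ring,
      Real.log_div (by positivity) hsab.ne', Real.log_sqrt hab0.le]
  rw [hlog1]
  have expand : t * a * ((Real.log (a*b) * π - 2 * π * Real.log ((Real.sqrt a + Real.sqrt b)/2))
      / Real.sqrt (a*b))
      = t * (a / Real.sqrt (a*b)) * (Real.log (a*b) * π
          - 2 * π * Real.log ((Real.sqrt a + Real.sqrt b)/2)) := by
    ring
  rw [expand, hkey]
  ring
end

section
/- For real numbers 0 < a < b < 1 and t ∈ ℝ, ∫_a^b (t log x / (1−x)) √((x−a)/(b−x)) dx = 2πt [ log(2/(√a + √b)) + (√(1−a)/√(1−b)) log((√(a(1−b)) + √(b(1−a)))/(√(1−a) + √(1−b))) ]. -/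
open Real MeasureTheory Set Filter Topology



/-- the substitution map for Lemma A -/
lemma image_subst1 (a b : ℝ) (hab : a < b) :
    (fun u : ℝ => (a + b*u^2)/(1+u^2)) '' (Set.Ioi 0) = Set.Ioo a b := by
  ext x
  constructor
  · rintro ⟨u, hu, rfl⟩
    have hu0 : (0:ℝ) < u := hu
    have h1 : (0:ℝ) < 1 + u^2 := by positivity
    constructor
    · rw [lt_div_iff₀ h1]; nlinarith [pow_pos hu0 2]
    · rw [div_lt_iff₀ h1]; nlinarith [pow_pos hu0 2]
  · rintro ⟨hxa, hxb⟩
    have hbx : (0:ℝ) < b - x := by linarith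
    have hxa' : (0:ℝ) < x - a := by linarith
    refine ⟨Real.sqrt ((x-a)/(b-x)), Real.sqrt_pos.2 (div_pos hxa' hbx), ?_⟩
    have h1 : Real.sqrt ((x-a)/(b-x))^2 = (x-a)/(b-x) :=
      Real.sq_sqrt (le_of_lt (div_pos hxa' hbx))
    simp only [h1]
    have h2 : b - x ≠ 0 := ne_of_gt hbx
    have h3 : (1 + (x-a)/(b-x)) = (b-a)/(b-x) := by field_simp; ring
    rw [h3, div_div_eq_mul_div]
    rw [div_eq_iff (by linarith : b - a ≠ 0)]
    field_simp
    ring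

lemma injOn_subst1 (a b : ℝ) (hab : a < b) :
    Set.InjOn (fun u : ℝ => (a + b*u^2)/(1+u^2)) (Set.Ioi 0) := by
  intro u hu v hv h
  simp only at h
  have hu0 : (0:ℝ) < u := hu
  have hv0 : (0:ℝ) < v := hv
  have h1 : (0:ℝ) < 1 + u^2 := by positivity
  have h2 : (0:ℝ) < 1 + v^2 := by positivity
  have : u^2 = v^2 := by
    field_simp at h
    nlinarith [h]
  nlinarith [this]

lemma deriv_subst1 (a b : ℝ) (u : ℝ) :
    HasDerivAt (fun u : ℝ => (a + b*u^2)/(1+u^2))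
      (2*u*(b-a)/(1+u^2)^2) u := by
  have h1 : (0:ℝ) < 1 + u^2 := by positivity
  have h := (((hasDerivAt_pow 2 u).const_mul b).const_add a).div
    (((hasDerivAt_pow 2 u).const_add 1)) (ne_of_gt h1)
  refine h.congr_deriv ?_
  field_simp
  ring


lemma cont_inv_add_sq {A B : ℝ} (hA : 0 < A) (hB : 0 ≤ B) :
    Continuous (fun u : ℝ => (A + B*u^2)⁻¹) := by
  refine Continuous.inv₀ (by continuity) (fun u => ?_)
  positivity

lemma integrableOn_inv_add_sq {A B : ℝ} (hA : 0 < A) (hB : 0 < B) :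
    IntegrableOn (fun u : ℝ => (A + B*u^2)⁻¹) (Set.Ioi 0) := by
  have hm : 0 < min A B := lt_min hA hB
  have hg : Integrable (fun u : ℝ => (min A B)⁻¹ * (1 + u^2)⁻¹) :=
    integrable_inv_one_add_sq.const_mul _
  refine Integrable.mono' hg.integrableOn
    ((cont_inv_add_sq hA hB.le).aestronglyMeasurable.restrict) ?_
  refine Filter.Eventually.of_forall (fun u => ?_)
  have h1 : 0 < A + B*u^2 := by positivity
  have h2 : 0 < 1 + u^2 := by positivity
  rw [Real.norm_eq_abs, abs_of_pos (inv_pos.2 h1), ← mul_inv]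
  refine inv_anti₀ (by positivity) ?_
  have : min A B * (1 + u^2) = min A B + min A B * u^2 := by ring
  rw [this]
  gcongr
  · exact min_le_left _ _
  · exact min_le_right _ _

lemma integral_inv_add_sq {A B : ℝ} (hA : 0 < A) (hB : 0 < B) :
    ∫ u in Set.Ioi (0:ℝ), (A + B*u^2)⁻¹ = π / (2 * Real.sqrt (A*B)) := by
  have hk : 0 < Real.sqrt (B/A) := Real.sqrt_pos.2 (div_pos hB hA)
  have key : ∀ u : ℝ, (A + B*u^2)⁻¹ = A⁻¹ * (1 + (Real.sqrt (B/A) * u)^2)⁻¹ := by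
    intro u
    have h1 : (Real.sqrt (B/A))^2 = B/A := Real.sq_sqrt (le_of_lt (div_pos hB hA))
    rw [mul_pow, h1, ← mul_inv]
    congr 1
    field_simp
  simp_rw [key]
  rw [integral_const_mul]
  have := MeasureTheory.integral_comp_mul_left_Ioi
    (fun u : ℝ => (1 + u^2)⁻¹) 0 hk
  simp only [mul_zero, smul_eq_mul] at this
  rw [this, integral_Ioi_inv_one_add_sq]
  have h1 : Real.sqrt (B/A) = Real.sqrt B / Real.sqrt A := Real.sqrt_div hB.le A
  have hA2 : (Real.sqrt A)^2 = A := Real.sq_sqrt hA.le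
  have hB2 : (Real.sqrt B)^2 = B := Real.sq_sqrt hB.le
  have hsA : (0:ℝ) < Real.sqrt A := Real.sqrt_pos.2 hA
  have hsB : (0:ℝ) < Real.sqrt B := Real.sqrt_pos.2 hB
  rw [Real.arctan_zero, sub_zero, Real.sqrt_mul hA.le, h1]
  rw [← hA2]
  field_simp
  rw [Real.sqrt_sq hsA.le]


lemma div_sqrt_mul {A B : ℝ} (hA : 0 < A) (hB : 0 < B) :
    A / Real.sqrt (A*B) = Real.sqrt (A/B) := by
  have hsA : (0:ℝ) < Real.sqrt A := Real.sqrt_pos.2 hA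
  have hsB : (0:ℝ) < Real.sqrt B := Real.sqrt_pos.2 hB
  have hs : (0:ℝ) < Real.sqrt (A*B) := Real.sqrt_pos.2 (by positivity)
  have key : Real.sqrt (A*B) * Real.sqrt A = A * Real.sqrt B := by
    rw [← Real.sqrt_mul (by positivity : (0:ℝ) ≤ A*B),
      show A*B*A = A^2*B by ring,
      Real.sqrt_mul (sq_nonneg A), Real.sqrt_sq hA.le]
  rw [Real.sqrt_div hA.le, div_eq_div_iff hs.ne' hsB.ne']
  linear_combination (-2:ℝ)⁻¹*2*key

lemma lemA (a b c : ℝ) (ha : 0 < a) (hab : a < b) (hc : 0 < c) :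
    ∫ x in Set.Ioo a b, Real.sqrt ((x-a)/(b-x)) / (x + c)
      = π * (1 - Real.sqrt ((a+c)/(b+c))) := by
  have hac : (0:ℝ) < a + c := by linarith
  have hbc : (0:ℝ) < b + c := by linarith
  rw [← image_subst1 a b hab,
    MeasureTheory.integral_image_eq_integral_abs_deriv_smul measurableSet_Ioi
      (fun u _ => (deriv_subst1 a b u).hasDerivWithinAt) (injOn_subst1 a b hab)]
  rw [MeasureTheory.setIntegral_congr_fun measurableSet_Ioi
      (g := fun u : ℝ => 2*(1+u^2)⁻¹ - 2*(a+c)*((a+c)+(b+c)*u^2)⁻¹) ?_]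
  · rw [MeasureTheory.integral_sub
      ((integrable_inv_one_add_sq.const_mul 2).integrableOn)
      ((integrableOn_inv_add_sq hac hbc).const_mul (2*(a+c))),
      MeasureTheory.integral_const_mul, MeasureTheory.integral_const_mul,
      integral_Ioi_inv_one_add_sq, Real.arctan_zero, sub_zero,
      integral_inv_add_sq hac hbc]
    rw [← div_sqrt_mul hac hbc]
    have hs : (0:ℝ) < Real.sqrt ((a+c)*(b+c)) := Real.sqrt_pos.2 (by positivity)
    field_simp
  · intro u hu
    have hu0 : (0:ℝ) < u := hu
    have h1 : (0:ℝ) < 1 + u^2 := by positivity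
    have h1' : (1:ℝ) + u^2 ≠ 0 := ne_of_gt h1
    have hD : (0:ℝ) < (a+c)+(b+c)*u^2 := by positivity
    simp only [smul_eq_mul]
    have e1 : (a + b*u^2)/(1+u^2) - a = (b-a)*u^2/(1+u^2) := by
      field_simp; ring
    have e2 : b - (a + b*u^2)/(1+u^2) = (b-a)/(1+u^2) := by
      field_simp; ring
    have e3 : (a + b*u^2)/(1+u^2) + c = ((a+c)+(b+c)*u^2)/(1+u^2) := by
      field_simp; ring
    rw [e1, e2, e3]
    have hba : b - a ≠ 0 := by linarith
    have e4 : (b-a)*u^2/(1+u^2) / ((b-a)/(1+u^2)) = u^2 := by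
      field_simp
    rw [e4, Real.sqrt_sq hu0.le]
    rw [abs_of_pos (div_pos (by nlinarith : (0:ℝ) < 2*u*(b-a)) (by positivity))]
    field_simp
    ring


lemma integrableOn_B {x : ℝ} (hx : 0 < x) (hx1 : x ≤ 1) :
    IntegrableOn (fun c : ℝ => ((1+c)*(x+c))⁻¹) (Set.Ioi 0) := by
  have hg : Integrable (fun c : ℝ => x⁻¹ * (1 + c^2)⁻¹) :=
    integrable_inv_one_add_sq.const_mul _
  refine Integrable.mono' hg.integrableOn ?_ ?_
  · refine ContinuousOn.aestronglyMeasurable ?_ measurableSet_Ioi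
    refine ContinuousOn.inv₀ (by fun_prop) (fun c hc => ?_)
    have hc0 : (0:ℝ) < c := hc
    positivity
  · filter_upwards [MeasureTheory.ae_restrict_mem measurableSet_Ioi] with c hc
    have hc0 : (0:ℝ) < c := hc
    have h1 : (0:ℝ) < (1+c)*(x+c) := by positivity
    rw [Real.norm_eq_abs, abs_of_pos (inv_pos.2 h1), ← mul_inv]
    refine inv_anti₀ (by positivity) ?_
    nlinarith
lemma lemB {x : ℝ} (hx : 0 < x) (hx1 : x < 1) :
    ∫ c in Set.Ioi (0:ℝ), ((1+c)*(x+c))⁻¹ = Real.log x / (x-1) := by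
  have h1x : x - 1 ≠ 0 := by linarith
  have hF : ∀ c ∈ Set.Ici (0:ℝ),
      HasDerivAt (fun c : ℝ => Real.log ((x+c)/(1+c)) * (1-x)⁻¹)
        (((1+c)*(x+c))⁻¹) c := by
    intro c hc
    have hc0 : (0:ℝ) ≤ c := hc
    have hxc : (0:ℝ) < x + c := by linarith
    have h1c : (0:ℝ) < 1 + c := by linarith
    have hq : HasDerivAt (fun c : ℝ => (x+c)/(1+c))
        ((1*(1+c) - (x+c)*1)/(1+c)^2) c := by
      exact (HasDerivAt.const_add x (hasDerivAt_id c)).div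
        (HasDerivAt.const_add 1 (hasDerivAt_id c)) (ne_of_gt h1c)
    have hpos : (0:ℝ) < (x+c)/(1+c) := div_pos hxc h1c
    have := ((Real.hasDerivAt_log (ne_of_gt hpos)).comp c hq).mul_const (1-x)⁻¹
    have hne1 : x + c ≠ 0 := ne_of_gt hxc
    have hne2 : (1:ℝ) + c ≠ 0 := ne_of_gt h1c
    have hne3 : (1:ℝ) - x ≠ 0 := by linarith
    refine this.congr_deriv ?_
    field_simp
    ring
  have htend : Tendsto (fun c : ℝ => Real.log ((x+c)/(1+c)) * (1-x)⁻¹)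
      atTop (𝓝 0) := by
    have h2 : Tendsto (fun c : ℝ => (x+c)/(1+c)) atTop (𝓝 1) := by
      have h3 : (fun c : ℝ => (x+c)/(1+c)) =ᶠ[atTop] fun c => 1 + (x-1)/(1+c) := by
        filter_upwards [Filter.eventually_gt_atTop (0:ℝ)] with c hc
        field_simp
        ring
      rw [Filter.tendsto_congr' h3]
      have h4 : Tendsto (fun c : ℝ => (x-1)/(1+c)) atTop (𝓝 0) := by
        apply Tendsto.div_atTop tendsto_const_nhds
        exact Filter.tendsto_atTop_add_const_left _ 1 Filter.tendsto_id
      simpa using tendsto_const_nhds.add h4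
    have h5 : Tendsto (fun c : ℝ => Real.log ((x+c)/(1+c))) atTop (𝓝 0) := by
      have := (Real.continuousAt_log (by norm_num : (1:ℝ) ≠ 0)).tendsto.comp h2
      simpa [Function.comp_def] using this
    simpa using h5.mul_const (1-x)⁻¹
  rw [MeasureTheory.integral_Ioi_of_hasDerivAt_of_tendsto'
      hF (integrableOn_B hx hx1.le) htend]
  rw [add_zero, zero_sub]
  rw [show (1:ℝ)+0 = 1 by norm_num, div_one]
  field_simp
  rw [neg_eq_iff_eq_neg, div_eq_iff (show (1:ℝ)-x ≠ 0 by linarith)]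
  ring


lemma image_subst2 {a b : ℝ} (ha : 0 < a) (hab : a < b) :
    (fun u : ℝ => (b*u^2 - a)/(1-u^2)) '' (Set.Ioo (Real.sqrt a / Real.sqrt b) 1)
      = Set.Ioi 0 := by
  have hb : 0 < b := lt_trans ha hab
  have hsa : 0 < Real.sqrt a := Real.sqrt_pos.2 ha
  have hsb : 0 < Real.sqrt b := Real.sqrt_pos.2 hb
  have hsa2 : Real.sqrt a * Real.sqrt a = a := Real.mul_self_sqrt ha.le
  have hsb2 : Real.sqrt b * Real.sqrt b = b := Real.mul_self_sqrt hb.le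
  ext c
  constructor
  · rintro ⟨u, ⟨hu1, hu2⟩, rfl⟩
    have h3 : Real.sqrt a < u * Real.sqrt b := by
      rwa [div_lt_iff₀ hsb] at hu1
    have hupos : 0 < u := lt_of_le_of_lt (by positivity) hu1
    have h4 : 0 < b*u^2 - a := by nlinarith
    have h5 : 0 < 1 - u^2 := by nlinarith
    exact div_pos h4 h5
  · intro hc
    have hc0 : (0:ℝ) < c := hc
    have hbc : (0:ℝ) < b + c := by linarith
    have hac : (0:ℝ) < a + c := by linarith
    refine ⟨Real.sqrt ((a+c)/(b+c)), ⟨?_, ?_⟩, ?_⟩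
    · rw [show Real.sqrt a / Real.sqrt b = Real.sqrt (a/b) from (Real.sqrt_div ha.le b).symm]
      apply Real.sqrt_lt_sqrt (div_pos ha hb).le
      rw [div_lt_div_iff₀ hb hbc]
      nlinarith
    · rw [show (1:ℝ) = Real.sqrt 1 from Real.sqrt_one.symm]
      apply Real.sqrt_lt_sqrt (div_pos hac hbc).le
      rw [div_lt_one hbc]
      linarith
    · have hsq : Real.sqrt ((a+c)/(b+c)) ^ 2 = (a+c)/(b+c) :=
        Real.sq_sqrt (div_pos hac hbc).le
      simp only [hsq]
      have h1 : (1:ℝ) - (a+c)/(b+c) = (b-a)/(b+c) := by field_simp; ring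
      have h2 : b * ((a+c)/(b+c)) - a = c*(b-a)/(b+c) := by field_simp; ring
      rw [h1, h2]
      have hba : b - a ≠ 0 := by linarith
      have hbc' : b + c ≠ 0 := ne_of_gt hbc
      field_simp

lemma injOn_subst2 {a b : ℝ} (ha : 0 < a) (hab : a < b) :
    Set.InjOn (fun u : ℝ => (b*u^2 - a)/(1-u^2))
      (Set.Ioo (Real.sqrt a / Real.sqrt b) 1) := by
  have hb : 0 < b := lt_trans ha hab
  have hsa : 0 < Real.sqrt a := Real.sqrt_pos.2 ha
  have hsb : 0 < Real.sqrt b := Real.sqrt_pos.2 hb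
  intro u hu v hv h
  simp only at h
  have hu0 : 0 < u := lt_of_le_of_lt (by positivity) hu.1
  have hv0 : 0 < v := lt_of_le_of_lt (by positivity) hv.1
  have h1u : (0:ℝ) < 1 - u^2 := by nlinarith [hu.2]
  have h1v : (0:ℝ) < 1 - v^2 := by nlinarith [hv.2]
  rw [div_eq_div_iff (ne_of_gt h1u) (ne_of_gt h1v)] at h
  have h2 : u^2 = v^2 := by nlinarith [h]
  nlinarith [h2]

lemma deriv_subst2 {a b u : ℝ} (h : 1 - u^2 ≠ 0) :
    HasDerivAt (fun u : ℝ => (b*u^2 - a)/(1-u^2))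
      (2*u*(b-a)/(1-u^2)^2) u := by
  have hd := (((hasDerivAt_pow 2 u).const_mul b).sub_const a).div
    (((hasDerivAt_pow 2 u).const_mul 1).const_sub 1) ?_
  · refine (hd.congr_deriv ?_).congr_of_eventuallyEq (Filter.Eventually.of_forall fun v => by simp)
    field_simp
    ring
  · simpa using h


noncomputable def Ftil (A B : ℝ) : ℝ → ℝ := fun u =>
  -2*Real.log (1+u) + Real.log (A - B*u^2)
    + (Real.sqrt A/Real.sqrt B) *
        (Real.log (Real.sqrt A + Real.sqrt B*u) - Real.log (Real.sqrt A - Real.sqrt B*u))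

lemma ftcC {A B u₀ : ℝ} (hB : 0 < B) (hBA : B < A) (h0 : 0 < u₀) (h01 : u₀ ≤ 1) :
    ∫ u in u₀..1, 2*u*(A-B)/((1+u)*(A - B*u^2)) = Ftil A B 1 - Ftil A B u₀ := by
  have hA : 0 < A := lt_trans hB hBA
  have hsA : 0 < Real.sqrt A := Real.sqrt_pos.2 hA
  have hsB : 0 < Real.sqrt B := Real.sqrt_pos.2 hB
  have hsBA : Real.sqrt B < Real.sqrt A := Real.sqrt_lt_sqrt hB.le hBA
  have hA2 : Real.sqrt A * Real.sqrt A = A := Real.mul_self_sqrt hA.le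
  have hB2 : Real.sqrt B * Real.sqrt B = B := Real.mul_self_sqrt hB.le
  have key : ∀ u ∈ Set.Icc u₀ 1,
      HasDerivAt (Ftil A B) (2*u*(A-B)/((1+u)*(A - B*u^2))) u := by
    intro u hu
    obtain ⟨hu1, hu2⟩ := hu
    have hu0 : 0 < u := lt_of_lt_of_le h0 hu1
    have h1u : (0:ℝ) < 1 + u := by linarith
    have hu21 : u*u ≤ 1 := by nlinarith
    have hq : (0:ℝ) < A - B*u^2 := by nlinarith [mul_le_mul_of_nonneg_left hu21 hB.le]
    have hp : (0:ℝ) < Real.sqrt A - Real.sqrt B * u := by nlinarith [mul_le_mul_of_nonneg_left hu2 hsB.le]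
    have hm : (0:ℝ) < Real.sqrt A + Real.sqrt B * u := by positivity
    have T1 : HasDerivAt (fun u : ℝ => Real.log (1+u)) ((1+u)⁻¹ * 1) u :=
      (Real.hasDerivAt_log (ne_of_gt h1u)).comp u ((hasDerivAt_id u).const_add 1)
    have T2 : HasDerivAt (fun u : ℝ => Real.log (A - B*u^2))
        ((A - B*u^2)⁻¹ * (-(B * (2*u^1)))) u := by
      have := (Real.hasDerivAt_log (ne_of_gt hq)).comp u
        (((hasDerivAt_pow 2 u).const_mul B).const_sub A)
      norm_num at this ⊢
      exact this
    have T3a : HasDerivAt (fun u : ℝ => Real.log (Real.sqrt A + Real.sqrt B*u))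
        ((Real.sqrt A + Real.sqrt B*u)⁻¹ * (Real.sqrt B * 1)) u := by
      have := (Real.hasDerivAt_log (ne_of_gt hm)).comp u
        (((hasDerivAt_id u).const_mul (Real.sqrt B)).const_add (Real.sqrt A))
      exact this
    have T3b : HasDerivAt (fun u : ℝ => Real.log (Real.sqrt A - Real.sqrt B*u))
        ((Real.sqrt A - Real.sqrt B*u)⁻¹ * -(Real.sqrt B * 1)) u := by
      have := (Real.hasDerivAt_log (ne_of_gt hp)).comp u
        (((hasDerivAt_id u).const_mul (Real.sqrt B)).const_sub (Real.sqrt A))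
      exact this
    have hsum := ((T1.const_mul (-2)).add T2).add ((T3a.sub T3b).const_mul
      (Real.sqrt A/Real.sqrt B))
    have heq : Ftil A B = fun u : ℝ => (-2) * Real.log (1+u) + Real.log (A - B*u^2)
        + (Real.sqrt A/Real.sqrt B) *
          (Real.log (Real.sqrt A + Real.sqrt B*u) - Real.log (Real.sqrt A - Real.sqrt B*u)) := by
      funext v; simp only [Ftil]
    rw [heq]
    refine hsum.congr_deriv ?_
    set sA := Real.sqrt A with hsadef
    set sB := Real.sqrt B with hsbdef
    rw [← hA2, ← hB2]
    have d1 : (1:ℝ) + u ≠ 0 := ne_of_gt h1u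
    have d2 : sA*sA - sB*sB*u^2 ≠ 0 := by rw [hA2, hB2]; exact ne_of_gt hq
    have d3 : sA + sB*u ≠ 0 := ne_of_gt hm
    have d4 : sA - sB*u ≠ 0 := ne_of_gt hp
    have d5 : sB ≠ 0 := ne_of_gt hsB
    have d6 : sA^2 - u^2*sB^2 ≠ 0 := by intro h; apply d2; linear_combination h
    have d7 : sA + u*sB ≠ 0 := by rwa [mul_comm u]
    have d8 : sA - u*sB ≠ 0 := by rwa [mul_comm u]
    field_simp
    ring
  have hcont : IntervalIntegrable (fun u : ℝ => 2*u*(A-B)/((1+u)*(A - B*u^2)))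
      MeasureTheory.volume u₀ 1 := by
    apply ContinuousOn.intervalIntegrable
    rw [Set.uIcc_of_le h01]
    apply ContinuousOn.div (by fun_prop) (by fun_prop)
    intro x hx
    obtain ⟨hx1, hx2⟩ := hx
    have hx0 : 0 < x := lt_of_lt_of_le h0 hx1
    have hx21 : x*x ≤ 1 := by nlinarith
    have : (0:ℝ) < A - B*x^2 := by nlinarith [mul_le_mul_of_nonneg_left hx21 hB.le]
    positivity
  rw [intervalIntegral.integral_eq_sub_of_hasDerivAt
    (fun u hu => key u (by rwa [Set.uIcc_of_le h01] at hu)) hcont]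


lemma lemC {a b : ℝ} (ha : 0 < a) (hab : a < b) (hb : b < 1) :
    ∫ c in Set.Ioi (0:ℝ), (1 - Real.sqrt ((a+c)/(b+c))) * (1+c)⁻¹
      = Ftil (1-a) (1-b) 1 - Ftil (1-a) (1-b) (Real.sqrt a / Real.sqrt b) := by
  have hb0 : 0 < b := lt_trans ha hab
  have hsa : 0 < Real.sqrt a := Real.sqrt_pos.2 ha
  have hsb : 0 < Real.sqrt b := Real.sqrt_pos.2 hb0
  have hu0pos : 0 < Real.sqrt a / Real.sqrt b := div_pos hsa hsb
  have hu0lt : Real.sqrt a / Real.sqrt b < 1 := by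
    rw [div_lt_one hsb]
    exact Real.sqrt_lt_sqrt ha.le hab
  have hderiv : ∀ u ∈ Set.Ioo (Real.sqrt a / Real.sqrt b) 1,
      HasDerivWithinAt (fun u : ℝ => (b*u^2 - a)/(1-u^2)) (2*u*(b-a)/(1-u^2)^2)
        (Set.Ioo (Real.sqrt a / Real.sqrt b) 1) u := by
    intro u hu
    have hupos : 0 < u := lt_of_le_of_lt (by positivity) hu.1
    have h2 : 1 - u^2 ≠ 0 := by nlinarith [hu.2]
    exact (deriv_subst2 h2).hasDerivWithinAt
  rw [← image_subst2 ha hab,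
    MeasureTheory.integral_image_eq_integral_abs_deriv_smul measurableSet_Ioo
      hderiv (injOn_subst2 ha hab)]
  rw [MeasureTheory.setIntegral_congr_fun measurableSet_Ioo
      (g := fun u : ℝ => 2*u*((1-a)-(1-b))/((1+u)*((1-a) - (1-b)*u^2))) ?_]
  · rw [show ∫ u in Set.Ioo (Real.sqrt a / Real.sqrt b) 1,
        2*u*((1-a)-(1-b))/((1+u)*((1-a) - (1-b)*u^2))
        = ∫ u in Real.sqrt a / Real.sqrt b..1,
            2*u*((1-a)-(1-b))/((1+u)*((1-a) - (1-b)*u^2)) by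
      rw [intervalIntegral.integral_of_le hu0lt.le, integral_Ioc_eq_integral_Ioo]]
    exact ftcC (by linarith) (by linarith) hu0pos hu0lt.le
  · intro u hu
    obtain ⟨hu1, hu2⟩ := hu
    have hupos : 0 < u := lt_of_le_of_lt (by positivity) hu1
    have h1u2 : (0:ℝ) < 1 - u^2 := by nlinarith
    have hden : (0:ℝ) < (1-a) - (1-b)*u^2 := by nlinarith
    have e1 : a + (b*u^2 - a)/(1-u^2) = (b-a)*u^2/(1-u^2) := by
      field_simp; ring
    have e2 : b + (b*u^2 - a)/(1-u^2) = (b-a)/(1-u^2) := by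
      field_simp; ring
    have e3 : 1 + (b*u^2 - a)/(1-u^2) = ((1-a) - (1-b)*u^2)/(1-u^2) := by
      field_simp; ring
    simp only [smul_eq_mul]
    rw [e1, e2, e3]
    have hba : b - a ≠ 0 := by linarith
    have e4 : (b-a)*u^2/(1-u^2) / ((b-a)/(1-u^2)) = u^2 := by
      field_simp
    rw [e4, Real.sqrt_sq hupos.le]
    rw [abs_of_pos (div_pos (by nlinarith : (0:ℝ) < 2*u*(b-a)) (by positivity))]
    field_simp
    ring


section main
variable {a b : ℝ}

lemma intg0 (ha : 0 < a) (hab : a < b) (hb : b < 1) :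
    IntegrableOn (fun x : ℝ => Real.sqrt ((x-a)/(b-x)) * (Real.log x/(x-1)))
      (Set.Ioo a b) := by
  set C : ℝ := Real.sqrt (b-a) * ((-Real.log a)/(1-b)) with hC
  have hCnn : 0 ≤ C := by
    apply mul_nonneg (Real.sqrt_nonneg _)
    apply div_nonneg _ (by linarith)
    simp only [neg_nonneg]
    exact Real.log_nonpos ha.le (by linarith)
  have hgint : IntegrableOn (fun x : ℝ => C * (b-x) ^ (-(1/2) : ℝ)) (Set.Ioo a b) := by
    have h1 : IntervalIntegrable (fun x : ℝ => x ^ (-(1/2):ℝ)) volume 0 (b-a) :=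
      intervalIntegral.intervalIntegrable_rpow' (by norm_num)
    have h2 := (h1.comp_sub_left b)
    simp only [sub_zero, sub_sub_cancel] at h2
    have h4 : IntervalIntegrable (fun x : ℝ => (b-x) ^ (-(1/2):ℝ)) volume a b := h2.symm
    rw [intervalIntegrable_iff_integrableOn_Ioo_of_le hab.le] at h4
    exact h4.const_mul C
  refine Integrable.mono' hgint ?_ ?_
  · apply ContinuousOn.aestronglyMeasurable _ measurableSet_Ioo
    apply ContinuousOn.mul
    · apply Continuous.comp_continuousOn Real.continuous_sqrt
      apply ContinuousOn.div (by fun_prop) (by fun_prop)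
      intro x hx; exact ne_of_gt (by linarith [hx.2] : (0:ℝ) < b - x)
    · apply ContinuousOn.div
      · apply ContinuousOn.log (by fun_prop)
        intro x hx; exact ne_of_gt (by linarith [hx.1])
      · fun_prop
      · intro x hx; exact ne_of_lt (by linarith [hx.2, hb] : x - 1 < 0)
  · filter_upwards [MeasureTheory.ae_restrict_mem measurableSet_Ioo] with x hx
    obtain ⟨hx1, hx2⟩ := hx
    have hx0 : 0 < x := lt_trans ha hx1
    have hxlt1 : x < 1 := lt_trans hx2 hb
    have hbx : 0 < b - x := by linarith
    have hsbx : 0 < Real.sqrt (b-x) := Real.sqrt_pos.2 hbx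
    have hw : Real.sqrt ((x-a)/(b-x)) = Real.sqrt (x-a) / Real.sqrt (b-x) :=
      Real.sqrt_div (by linarith) _
    have hq0 : 0 ≤ Real.log x / (x-1) := by
      rw [div_nonneg_iff]
      right
      exact ⟨Real.log_nonpos hx0.le hxlt1.le, by linarith⟩
    have hrpow : (b-x) ^ (-(1/2) : ℝ) = (Real.sqrt (b-x))⁻¹ := by
      rw [Real.rpow_neg hbx.le, Real.sqrt_eq_rpow]
    rw [Real.norm_eq_abs, abs_of_nonneg (mul_nonneg (Real.sqrt_nonneg _) hq0), hw,
      hrpow, hC]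
    have h5 : Real.sqrt (x-a) ≤ Real.sqrt (b-a) := Real.sqrt_le_sqrt (by linarith)
    have h6 : Real.log x / (x-1) ≤ (-Real.log a)/(1-b) := by
      rw [show Real.log x/(x-1) = (-Real.log x)/(1-x) by
        rw [show (1:ℝ)-x = -(x-1) by ring, neg_div_neg_eq]]
      apply div_le_div₀ (by simp only [neg_nonneg]; exact Real.log_nonpos ha.le (by linarith)) _
        (by linarith) (by linarith)
      simp only [neg_le_neg_iff]
      exact (Real.log_le_log_iff ha hx0).2 hx1.le
    calc Real.sqrt (x-a) / Real.sqrt (b-x) * (Real.log x/(x-1))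
        ≤ Real.sqrt (b-a) / Real.sqrt (b-x) * ((-Real.log a)/(1-b)) := by
          apply mul_le_mul _ h6 hq0 (by positivity)
          gcongr
      _ = Real.sqrt (b-a) * ((-Real.log a)/(1-b)) * (Real.sqrt (b-x))⁻¹ := by ring

set_option maxHeartbeats 2000000 in
lemma keyI (ha : 0 < a) (hab : a < b) (hb : b < 1) :
    ∫ x in Set.Ioo a b, Real.log x/(1-x) * Real.sqrt ((x-a)/(b-x))
      = -π * ∫ c in Set.Ioi (0:ℝ), (1 - Real.sqrt ((a+c)/(b+c))) * (1+c)⁻¹ := by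
  have hmeas : AEStronglyMeasurable
      (Function.uncurry (fun x c : ℝ => Real.sqrt ((x-a)/(b-x)) * ((1+c)*(x+c))⁻¹))
      ((volume.restrict (Set.Ioo a b)).prod (volume.restrict (Set.Ioi 0))) := by
    apply Measurable.aestronglyMeasurable
    apply Measurable.mul
    · exact (((measurable_fst.sub measurable_const).div
        (measurable_const.sub measurable_fst))).sqrt
    · exact ((measurable_const.add measurable_snd).mul
        (measurable_fst.add measurable_snd)).inv
  have hInt : Integrable
      (Function.uncurry (fun x c : ℝ => Real.sqrt ((x-a)/(b-x)) * ((1+c)*(x+c))⁻¹))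
      ((volume.restrict (Set.Ioo a b)).prod (volume.restrict (Set.Ioi 0))) := by
    rw [MeasureTheory.integrable_prod_iff hmeas]
    simp only [Function.uncurry_apply_pair]
    constructor
    · filter_upwards [MeasureTheory.ae_restrict_mem measurableSet_Ioo] with x hx
      exact (integrableOn_B (by linarith [hx.1] : (0:ℝ) < x)
        (by linarith [hx.2] : x ≤ 1)).const_mul _
    · apply MeasureTheory.Integrable.congr (intg0 ha hab hb)
      filter_upwards [MeasureTheory.ae_restrict_mem measurableSet_Ioo] with x hx
      have hx0 : (0:ℝ) < x := lt_trans ha hx.1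
      have hx1 : x < 1 := lt_trans hx.2 hb
      have hwnn : 0 ≤ Real.sqrt ((x-a)/(b-x)) := Real.sqrt_nonneg _
      have e1 : ∫ c in Set.Ioi (0:ℝ),
          ‖Real.sqrt ((x-a)/(b-x)) * ((1+c)*(x+c))⁻¹‖
          = ∫ c in Set.Ioi (0:ℝ), Real.sqrt ((x-a)/(b-x)) * ((1+c)*(x+c))⁻¹ := by
        refine MeasureTheory.setIntegral_congr_fun measurableSet_Ioi (fun c hc => ?_)
        have hc0 : (0:ℝ) < c := hc
        have : (0:ℝ) < (1+c)*(x+c) := by positivity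
        rw [Real.norm_eq_abs, abs_of_nonneg (mul_nonneg hwnn (inv_pos.2 this).le)]
      rw [e1, MeasureTheory.integral_const_mul, lemB hx0 hx1]
  calc ∫ x in Set.Ioo a b, Real.log x/(1-x) * Real.sqrt ((x-a)/(b-x))
      = ∫ x in Set.Ioo a b,
          -(Real.sqrt ((x-a)/(b-x)) * (Real.log x/(x-1))) := by
        refine MeasureTheory.integral_congr_ae (Filter.Eventually.of_forall (fun x => ?_))
        simp only []
        rw [show (1:ℝ)-x = -(x-1) by ring, div_neg]
        ring
    _ = -∫ x in Set.Ioo a b, Real.sqrt ((x-a)/(b-x)) * (Real.log x/(x-1)) :=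
        MeasureTheory.integral_neg _
    _ = -∫ x in Set.Ioo a b, ∫ c in Set.Ioi (0:ℝ),
          Real.sqrt ((x-a)/(b-x)) * ((1+c)*(x+c))⁻¹ := by
        congr 1
        refine MeasureTheory.setIntegral_congr_fun measurableSet_Ioo (fun x hx => ?_)
        have hx0 : (0:ℝ) < x := lt_trans ha hx.1
        have hx1 : x < 1 := lt_trans hx.2 hb
        rw [MeasureTheory.integral_const_mul, lemB hx0 hx1]
    _ = -∫ c in Set.Ioi (0:ℝ), ∫ x in Set.Ioo a b,
          Real.sqrt ((x-a)/(b-x)) * ((1+c)*(x+c))⁻¹ := by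
        rw [MeasureTheory.integral_integral_swap hInt]
    _ = -∫ c in Set.Ioi (0:ℝ), π * ((1 - Real.sqrt ((a+c)/(b+c))) * (1+c)⁻¹) := by
        congr 1
        refine MeasureTheory.setIntegral_congr_fun measurableSet_Ioi (fun c hc => ?_)
        have hc0 : (0:ℝ) < c := hc
        have e : ∀ x : ℝ, Real.sqrt ((x-a)/(b-x)) * ((1+c)*(x+c))⁻¹
            = (1+c)⁻¹ * (Real.sqrt ((x-a)/(b-x)) / (x+c)) := fun x => by
          rw [mul_inv]; ring
        simp only [e]
        rw [MeasureTheory.integral_const_mul, lemA a b c ha hab hc0]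
        ring
    _ = -π * ∫ c in Set.Ioi (0:ℝ), (1 - Real.sqrt ((a+c)/(b+c))) * (1+c)⁻¹ := by
        rw [MeasureTheory.integral_const_mul]
        ring

end main


lemma finalAlg {a b : ℝ} (ha : 0 < a) (hab : a < b) (hb : b < 1) :
    Ftil (1-a) (1-b) 1 - Ftil (1-a) (1-b) (Real.sqrt a/Real.sqrt b)
      = -2*Real.log (2/(Real.sqrt a + Real.sqrt b))
        - 2*(Real.sqrt (1-a)/Real.sqrt (1-b)) *
            Real.log ((Real.sqrt (a*(1-b)) + Real.sqrt (b*(1-a)))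
              /(Real.sqrt (1-a) + Real.sqrt (1-b))) := by
  have hb0 : 0 < b := lt_trans ha hab
  set sa := Real.sqrt a with hsa
  set sb := Real.sqrt b with hsb
  set sA := Real.sqrt (1-a) with hsA
  set sB := Real.sqrt (1-b) with hsB
  set P := Real.sqrt (b*(1-a)) with hP
  set Q := Real.sqrt (a*(1-b)) with hQ
  have hsa0 : 0 < sa := Real.sqrt_pos.2 ha
  have hsb0 : 0 < sb := Real.sqrt_pos.2 hb0
  have hsA0 : 0 < sA := Real.sqrt_pos.2 (by linarith)
  have hsB0 : 0 < sB := Real.sqrt_pos.2 (by linarith)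
  have hsa2 : sa*sa = a := Real.mul_self_sqrt ha.le
  have hsb2 : sb*sb = b := Real.mul_self_sqrt hb0.le
  have hsA2 : sA*sA = 1-a := Real.mul_self_sqrt (by linarith)
  have hsB2 : sB*sB = 1-b := Real.mul_self_sqrt (by linarith)
  have hPe : P = sb*sA := by rw [hP, hsb, hsA, Real.sqrt_mul hb0.le]
  have hQe : Q = sa*sB := by rw [hQ, hsa, hsB, Real.sqrt_mul ha.le]
  have hABlt : sB < sA := Real.sqrt_lt_sqrt (by linarith) (by linarith)
  have hPQlt : Q < P := by
    rw [hP, hQ]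
    exact Real.sqrt_lt_sqrt (by nlinarith) (by nlinarith)
  have hP0 : 0 < P := Real.sqrt_pos.2 (by nlinarith)
  have hQ0 : 0 < Q := Real.sqrt_pos.2 (by nlinarith)
  have key : Real.log (Q+P) + Real.log (P-Q)
      = Real.log (sA+sB) + Real.log (sA-sB) := by
    rw [← Real.log_mul (by positivity) (ne_of_gt (by linarith : (0:ℝ) < P - Q)),
      ← Real.log_mul (by positivity) (ne_of_gt (by linarith : (0:ℝ) < sA - sB))]
    congr 1
    rw [hPe, hQe]
    linear_combination (sA*sA)*hsb2 - (sB*sB)*hsa2 + (b-1)*hsA2 + (1-a)*hsB2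
  have hlogb : Real.log b = 2*Real.log sb := by
    rw [← hsb2, Real.log_mul (ne_of_gt hsb0) (ne_of_gt hsb0)]
    ring
  have F1 : Ftil (1-a) (1-b) 1
      = -2*Real.log 2 + Real.log (b-a)
        + (sA/sB)*(Real.log (sA+sB) - Real.log (sA-sB)) := by
    simp only [Ftil, ← hsA, ← hsB]
    rw [show (1:ℝ)+1 = 2 by norm_num, show (1:ℝ)-a-(1-b)*1^2 = b-a by ring,
      mul_one]
  have F0 : Ftil (1-a) (1-b) (sa/sb)
      = -2*(Real.log (sa+sb) - Real.log sb)
        + (Real.log (b-a) - Real.log b)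
        + (sA/sB)*((Real.log (Q+P) - Real.log sb)
            - (Real.log (P-Q) - Real.log sb)) := by
    simp only [Ftil, ← hsA, ← hsB]
    have e1 : (1:ℝ) + sa/sb = (sa+sb)/sb := by field_simp; ring
    have e2 : (1:ℝ)-a-(1-b)*(sa/sb)^2 = (b-a)/b := by
      rw [div_pow, show sa^2 = a by rw [pow_two, hsa2],
        show sb^2 = b by rw [pow_two, hsb2]]
      field_simp
      ring
    have e4 : sA + sB*(sa/sb) = (Q+P)/sb := by
      rw [hQe, hPe]; field_simp; ring
    have e5 : sA - sB*(sa/sb) = (P-Q)/sb := by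
      rw [hQe, hPe]; field_simp
    rw [e1, e2, e4, e5,
      Real.log_div (by positivity) (ne_of_gt hsb0),
      Real.log_div (ne_of_gt (by linarith : (0:ℝ) < b - a)) (ne_of_gt hb0),
      Real.log_div (by positivity) (ne_of_gt hsb0),
      Real.log_div (ne_of_gt (by linarith : (0:ℝ) < P - Q)) (ne_of_gt hsb0)]
  rw [F1, F0,
    Real.log_div (by norm_num : (2:ℝ) ≠ 0) (by positivity),
    Real.log_div (by positivity) (by positivity)]
  linear_combination hlogb + (sA/sB)*key

/-- `∫_a^b (t log x / (1-x)) √((x-a)/(b-x)) dx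
  = 2πt [log(2/(√a+√b)) + (√(1-a)/√(1-b)) log((√(a(1-b))+√(b(1-a)))/(√(1-a)+√(1-b)))]`
for `0 < a < b < 1`. -/
theorem log_weight_integral_one_sub_x (a b t : ℝ) (ha : 0 < a) (hab : a < b) (hb : b < 1) :
    (∫ x in a..b, t * Real.log x / (1 - x) * Real.sqrt ((x - a) / (b - x)))
      = 2 * π * t *
          (Real.log (2 / (Real.sqrt a + Real.sqrt b))
            + Real.sqrt (1 - a) / Real.sqrt (1 - b) *
                Real.log ((Real.sqrt (a * (1 - b)) + Real.sqrt (b * (1 - a)))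
                  / (Real.sqrt (1 - a) + Real.sqrt (1 - b)))) := by
  rw [intervalIntegral.integral_of_le hab.le, MeasureTheory.integral_Ioc_eq_integral_Ioo]
  simp_rw [show ∀ x : ℝ, t * Real.log x / (1 - x) * Real.sqrt ((x - a) / (b - x))
      = t * (Real.log x/(1 - x) * Real.sqrt ((x - a)/(b - x))) from fun x => by ring]
  rw [MeasureTheory.integral_const_mul, keyI ha hab hb, lemC ha hab hb, finalAlg ha hab hb]
  ring
end

section
/- For d ∈ (0,1), the integral ∫_0^d log(1−x)/√(x(d−x)) dx equals −2π log(2/(1 + √(1−d))). -/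
open Real MeasureTheory intervalIntegral

noncomputable def Fhe (r : ℝ) : ℝ := ∫ t in (0:ℝ)..π, Real.log (1 - 2*r*Real.cos t + r^2)

lemma Fhe_pos_aux {r : ℝ} (hr : |r| < 1) (t : ℝ) : 0 < 1 - 2*r*Real.cos t + r^2 := by
  have h1 : r * Real.cos t ≤ |r| := by
    calc r * Real.cos t ≤ |r * Real.cos t| := le_abs_self _
    _ = |r| * |Real.cos t| := abs_mul _ _
    _ ≤ |r| * 1 := by
        exact mul_le_mul_of_nonneg_left (abs_cos_le_one t) (abs_nonneg r)
    _ = |r| := mul_one _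
  nlinarith [sq_abs r, abs_nonneg r, sq_nonneg (1 - |r|)]

lemma Fhe_cont {r : ℝ} (hr : |r| < 1) :
    Continuous fun t => Real.log (1 - 2*r*Real.cos t + r^2) := by
  apply Continuous.log (by continuity)
  intro t
  exact (Fhe_pos_aux hr t).ne'

lemma Fhe_neg (r : ℝ) : Fhe (-r) = Fhe r := by
  have : ∀ t : ℝ, Real.log (1 - 2*(-r)*Real.cos t + (-r)^2)
      = (fun u => Real.log (1 - 2*r*Real.cos u + r^2)) (π - t) := by
    intro t
    simp [Real.cos_pi_sub]
  unfold Fhe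
  rw [intervalIntegral.integral_congr (fun t _ => this t),
    intervalIntegral.integral_comp_sub_left (fun u => Real.log (1 - 2*r*Real.cos u + r^2)) π]
  simp

lemma Fhe_sq {r : ℝ} (hr : |r| < 1) : Fhe (r^2) = 2 * Fhe r := by
  have hr2 : |r^2| < 1 := by rw [abs_pow]; nlinarith [abs_nonneg r]
  have key : ∀ t : ℝ, Real.log (1 - 2*r*Real.cos t + r^2) + Real.log (1 - 2*(-r)*Real.cos t + (-r)^2)
      = (fun u => Real.log (1 - 2*(r^2)*Real.cos u + (r^2)^2)) (2 * t) := by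
    intro t
    rw [← Real.log_mul (Fhe_pos_aux hr t).ne' (Fhe_pos_aux (by rwa [abs_neg]) t).ne']
    simp only
    congr 1
    rw [Real.cos_two_mul]
    ring
  have h1 : Fhe r + Fhe (-r) = ∫ t in (0:ℝ)..π,
      (fun u => Real.log (1 - 2*(r^2)*Real.cos u + (r^2)^2)) (2 * t) := by
    unfold Fhe
    rw [← intervalIntegral.integral_add ((Fhe_cont hr).intervalIntegrable _ _)
      ((Fhe_cont (by rwa [abs_neg] : |(-r)| < 1)).intervalIntegrable _ _)]
    exact intervalIntegral.integral_congr (fun t _ => key t)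
  have hsub := intervalIntegral.integral_comp_mul_left (a:=(0:ℝ)) (b:=π)
    (fun u => Real.log (1 - 2*(r^2)*Real.cos u + (r^2)^2)) two_ne_zero
  have h1 := h1.trans hsub
  simp only [mul_zero, smul_eq_mul] at h1
  have h2 : ∫ u in (0:ℝ)..(2*π), Real.log (1 - 2*(r^2)*Real.cos u + (r^2)^2)
      = 2 * Fhe (r^2) := by
    rw [← intervalIntegral.integral_add_adjacent_intervals (a := (0:ℝ)) (b := π) (c := 2*π)
      ((Fhe_cont hr2).intervalIntegrable _ _) ((Fhe_cont hr2).intervalIntegrable _ _)]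
    have h3 : (∫ u in π..(2*π), Real.log (1 - 2*(r^2)*Real.cos u + (r^2)^2)) = Fhe (r^2) := by
      have heq : ∀ u : ℝ, Real.log (1 - 2*(r^2)*Real.cos u + (r^2)^2)
          = (fun v => Real.log (1 - 2*(r^2)*Real.cos v + (r^2)^2)) (2*π - u) := by
        intro u
        have : Real.cos (2*π - u) = Real.cos u := by
          rw [Real.cos_sub]; simp
        simp [this]
      rw [intervalIntegral.integral_congr (fun u _ => heq u),
        intervalIntegral.integral_comp_sub_left
          (fun v => Real.log (1 - 2*(r^2)*Real.cos v + (r^2)^2)) (2*π),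
        show 2*π - 2*π = (0:ℝ) by ring, show 2*π - π = π by ring]
      rfl
    rw [h3]
    unfold Fhe
    ring
  rw [Fhe_neg, h2] at h1
  linarith

lemma Fhe_bound {x : ℝ} (hx : |x| < 1) : |Fhe x| ≤ π * (-2 * Real.log (1 - |x|)) := by
  have ha0 : (0:ℝ) ≤ |x| := abs_nonneg x
  have h1a : (0:ℝ) < 1 - |x| := by linarith
  have hpt : ∀ t ∈ Set.uIoc (0:ℝ) π, ‖Real.log (1 - 2*x*Real.cos t + x^2)‖ ≤ -2 * Real.log (1 - |x|) := by
    intro t _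
    have hy := Fhe_pos_aux hx t
    set y := 1 - 2*x*Real.cos t + x^2 with hy_def
    have hcl : |x * Real.cos t| ≤ |x| := by
      rw [abs_mul]
      calc |x| * |Real.cos t| ≤ |x| * 1 := mul_le_mul_of_nonneg_left (abs_cos_le_one t) ha0
      _ = |x| := mul_one _
    have hub : y ≤ (1 + |x|)^2 := by
      nlinarith [(abs_le.mp hcl).1, sq_abs x]
    have hlb : (1 - |x|)^2 ≤ y := by
      nlinarith [(abs_le.mp hcl).2, sq_abs x]
    rw [Real.norm_eq_abs, abs_le]
    constructor
    · have : Real.log ((1 - |x|)^2) ≤ Real.log y := Real.log_le_log (by positivity) hlb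
      rw [Real.log_pow] at this
      push_cast at this
      linarith
    · have h2 : Real.log y ≤ Real.log ((1 + |x|)^2) := Real.log_le_log hy hub
      rw [Real.log_pow] at h2
      push_cast at h2
      have h3 : Real.log (1 + |x|) ≤ |x| := by
        have := Real.log_le_sub_one_of_pos (x := 1 + |x|) (by linarith)
        linarith
      have h4 : |x| ≤ -Real.log (1 - |x|) := by
        have := Real.log_le_sub_one_of_pos h1a
        linarith
      linarith
  have := intervalIntegral.norm_integral_le_of_norm_le_const hpt
  rw [Real.norm_eq_abs] at this
  calc |Fhe x| ≤ -2 * Real.log (1 - |x|) * |π - 0| := this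
  _ = π * (-2 * Real.log (1 - |x|)) := by
      rw [sub_zero, abs_of_nonneg Real.pi_nonneg]; ring

theorem Fhe_zero {r : ℝ} (hr : |r| < 1) : Fhe r = 0 := by
  have ha0 : (0:ℝ) ≤ |r| := abs_nonneg r
  have key : ∀ n : ℕ, Fhe r = Fhe (r^(2^n)) * ((1:ℝ)/2)^n := by
    intro n
    induction n with
    | zero => simp
    | succ n ih =>
      have habs : |r^(2^n)| < 1 := by
        rw [abs_pow]
        exact pow_lt_one₀ ha0 hr (by positivity)
      have : Fhe (r^(2^(n+1))) = 2 * Fhe (r^(2^n)) := by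
        rw [show r^(2^(n+1)) = (r^(2^n))^2 by rw [← pow_mul]; ring_nf]
        exact Fhe_sq habs
      rw [this, ih]
      ring
  have hb : ∀ n : ℕ, |Fhe r| ≤ π * (-2 * Real.log (1 - |r|^(2^n))) * ((1:ℝ)/2)^n := by
    intro n
    have habs : |r^(2^n)| < 1 := by
      rw [abs_pow]; exact pow_lt_one₀ ha0 hr (by positivity)
    calc |Fhe r| = |Fhe (r^(2^n))| * ((1:ℝ)/2)^n := by
          rw [key n, abs_mul, abs_of_nonneg (by positivity : (0:ℝ) ≤ ((1:ℝ)/2)^n)]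
    _ ≤ π * (-2 * Real.log (1 - |r^(2^n)|)) * ((1:ℝ)/2)^n := by
          apply mul_le_mul_of_nonneg_right (Fhe_bound habs) (by positivity)
    _ = π * (-2 * Real.log (1 - |r|^(2^n))) * ((1:ℝ)/2)^n := by rw [abs_pow]
  have hlim : Filter.Tendsto (fun n : ℕ => π * (-2 * Real.log (1 - |r|^(2^n))) * ((1:ℝ)/2)^n)
      Filter.atTop (nhds 0) := by
    have h1 : Filter.Tendsto (fun n : ℕ => |r|^(2^n)) Filter.atTop (nhds 0) := by
      have hp : Filter.Tendsto (fun n : ℕ => |r|^n) Filter.atTop (nhds 0) :=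
        tendsto_pow_atTop_nhds_zero_of_lt_one ha0 hr
      have h2 : Filter.Tendsto (fun n : ℕ => 2^n) Filter.atTop Filter.atTop :=
        tendsto_pow_atTop_atTop_of_one_lt one_lt_two
      exact hp.comp h2
    have h3 : Filter.Tendsto (fun n : ℕ => Real.log (1 - |r|^(2^n))) Filter.atTop (nhds 0) := by
      have : Filter.Tendsto (fun n : ℕ => 1 - |r|^(2^n)) Filter.atTop (nhds 1) := by
        simpa using tendsto_const_nhds.sub h1
      have := (Real.continuousAt_log one_ne_zero).tendsto.comp this
      simpa [Function.comp_def] using this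
    have h4 : Filter.Tendsto (fun n : ℕ => ((1:ℝ)/2)^n) Filter.atTop (nhds 0) :=
      tendsto_pow_atTop_nhds_zero_of_lt_one (by norm_num) (by norm_num)
    have := ((tendsto_const_nhds (x := π)).mul (tendsto_const_nhds (x := (-2:ℝ)).mul h3)).mul h4
    simpa using this
  have habs : |Fhe r| ≤ 0 := ge_of_tendsto' hlim hb
  have := abs_nonneg (Fhe r)
  have : |Fhe r| = 0 := le_antisymm habs this
  exact abs_eq_zero.mp this

/-- `∫_0^d log(1-x)/√(x(d-x)) dx = -2π log(2/(1+√(1-d)))` for `d ∈ (0,1)`. -/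
theorem log_integral_hard_edge (d : ℝ) (hd : d ∈ Set.Ioo (0 : ℝ) 1) :
    (∫ x in (0 : ℝ)..d, Real.log (1 - x) / Real.sqrt (x * (d - x)))
      = -2 * π * Real.log (2 / (1 + Real.sqrt (1 - d))) := by
  obtain ⟨hd0, hd1⟩ := hd
  set s := Real.sqrt (1 - d) with hs_def
  have h1d : (0:ℝ) < 1 - d := by linarith
  have hs0 : 0 < s := Real.sqrt_pos.mpr h1d
  have hs1 : s < 1 := by
    have : s < Real.sqrt 1 := Real.sqrt_lt_sqrt (by linarith) (by linarith)
    simpa using this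
  have hs2 : s^2 = 1 - d := Real.sq_sqrt (by linarith)
  set f : ℝ → ℝ := fun t => d/2 * (1 - Real.cos t) with hf_def
  -- Step 1: change of variables
  have hderiv : ∀ t ∈ Set.Ioo (0:ℝ) π, HasDerivWithinAt f (d/2 * Real.sin t) (Set.Ioo 0 π) t := by
    intro t _
    have h1 : HasDerivAt (fun u => 1 - Real.cos u) (Real.sin t) t := by
      simpa using (Real.hasDerivAt_cos t).const_sub 1
    exact (h1.const_mul (d/2)).hasDerivWithinAt
  have hinj : Set.InjOn f (Set.Ioo 0 π) := by
    intro x hx y hy hxy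
    apply Real.injOn_cos (Set.Ioo_subset_Icc_self hx) (Set.Ioo_subset_Icc_self hy)
    have : d/2 * (1 - Real.cos x) = d/2 * (1 - Real.cos y) := hxy
    have hd2 : d/2 ≠ 0 := by positivity
    field_simp at this
    linarith
  have himg : f '' Set.Ioo 0 π = Set.Ioo 0 d := by
    apply Set.Subset.antisymm
    · rintro _ ⟨t, ht, rfl⟩
      have hc1 : Real.cos t < 1 := by
        have := Real.strictAntiOn_cos (Set.left_mem_Icc.mpr Real.pi_pos.le)
          (Set.Ioo_subset_Icc_self ht) ht.1
        simpa using this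
      have hc2 : -1 < Real.cos t := by
        have := Real.strictAntiOn_cos (Set.Ioo_subset_Icc_self ht)
          (Set.right_mem_Icc.mpr Real.pi_pos.le) ht.2
        simpa using this
      constructor
      · have : 0 < 1 - Real.cos t := by linarith
        positivity
      · simp only [hf_def]
        nlinarith
    · have hcont : ContinuousOn f (Set.Icc 0 π) := by
        apply Continuous.continuousOn
        continuity
      have h := intermediate_value_Ioo Real.pi_pos.le hcont
      have hf0 : f 0 = 0 := by simp [hf_def]
      have hfpi : f π = d := by rw [hf_def]; simp [Real.cos_pi]; ring
      rw [hf0, hfpi] at h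
      exact h
  have hchg := MeasureTheory.integral_image_eq_integral_abs_deriv_smul measurableSet_Ioo
    hderiv hinj (fun x => Real.log (1 - x) / Real.sqrt (x * (d - x)))
  rw [himg] at hchg
  have hIoo : ∀ t ∈ Set.Ioo (0:ℝ) π,
      |d/2 * Real.sin t| • (Real.log (1 - f t) / Real.sqrt (f t * (d - f t)))
        = Real.log (1 - d/2 * (1 - Real.cos t)) := by
    intro t ht
    have hsin : 0 < Real.sin t := Real.sin_pos_of_pos_of_lt_pi ht.1 ht.2
    have hpos : 0 < d/2 * Real.sin t := by positivity
    have hsq : f t * (d - f t) = (d/2 * Real.sin t)^2 := by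
      have hpy : Real.sin t ^ 2 = 1 - Real.cos t ^ 2 := by
        nlinarith [Real.sin_sq_add_cos_sq t]
      simp only [hf_def]
      linear_combination (-(d^2)/4) * hpy
    rw [hsq, Real.sqrt_sq hpos.le, smul_eq_mul, abs_of_pos hpos]
    rw [mul_div_cancel₀ _ hpos.ne']
  -- rewrite the original integral
  rw [intervalIntegral.integral_of_le hd0.le, MeasureTheory.integral_Ioc_eq_integral_Ioo, hchg,
    MeasureTheory.setIntegral_congr_fun measurableSet_Ioo hIoo,
    ← MeasureTheory.integral_Ioc_eq_integral_Ioo,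
    ← intervalIntegral.integral_of_le Real.pi_pos.le]
  -- Step 2: factorization
  set r : ℝ := -((1 - s)/(1 + s)) with hr_def
  have hr_abs : |r| < 1 := by
    rw [hr_def, abs_neg, abs_div, abs_of_pos (by linarith : (0:ℝ) < 1 - s),
      abs_of_pos (by linarith : (0:ℝ) < 1 + s)]
    rw [div_lt_one (by linarith)]
    linarith
  set c : ℝ := (1 + s)^2/4 with hc_def
  have hc_pos : 0 < c := by positivity
  have hfact : ∀ t : ℝ, 1 - d/2 * (1 - Real.cos t) = c * (1 - 2*r*Real.cos t + r^2) := by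
    intro t
    have h1s : (1:ℝ) + s ≠ 0 := by positivity
    have key : c * (1 - 2*r*Real.cos t + r^2) = (1+s^2)/2 + (1-s^2)/2 * Real.cos t := by
      rw [hc_def, hr_def]
      field_simp
      ring
    rw [key, hs2]
    ring
  have hlog : ∀ t : ℝ, Real.log (1 - d/2 * (1 - Real.cos t))
      = Real.log c + Real.log (1 - 2*r*Real.cos t + r^2) := by
    intro t
    rw [hfact t, Real.log_mul hc_pos.ne' (Fhe_pos_aux hr_abs t).ne']
  rw [intervalIntegral.integral_congr (fun t _ => hlog t),
    intervalIntegral.integral_add (intervalIntegrable_const)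
      ((Fhe_cont hr_abs).intervalIntegrable _ _)]
  have : (∫ t in (0:ℝ)..π, Real.log (1 - 2*r*Real.cos t + r^2)) = 0 := Fhe_zero hr_abs
  rw [this, intervalIntegral.integral_const, add_zero, sub_zero, smul_eq_mul]
  -- Step 3: final algebra
  have h2s : (2:ℝ)/(1+s) = ((1+s)/2)⁻¹ := by rw [inv_div]
  rw [h2s, Real.log_inv, hc_def,
    show (1+s)^2/4 = ((1+s)/2)^2 by ring, Real.log_pow]
  push_cast
  ring
end

section
/- For d ∈ (0,1), the integral ∫_0^d [1/(1−x)] · log(1−x)/√(x(d−x)) dx equals (π/√(1−d)) log( (4(1−d)/d) · (1 − √(1−d))/(1 + √(1−d)) ). -/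
open Real

open MeasureTheory Set intervalIntegral

lemma sqrt_integrable {d : ℝ} (hd0 : 0 < d) :
    IntegrableOn (fun x => (Real.sqrt (x * (d - x)))⁻¹) (Set.Ioo 0 d) := by
  have hmeas : ∀ s : Set ℝ, AEStronglyMeasurable (fun x => (Real.sqrt (x * (d - x)))⁻¹)
      (volume.restrict s) := by
    intro s
    exact ((Real.continuous_sqrt.comp (by continuity)).measurable.inv).aestronglyMeasurable
  have h2 : (0:ℝ) < d/2 := by linarith
  have hIoo : Set.Ioo (0:ℝ) d = Set.Ioc 0 (d/2) ∪ Set.Ioo (d/2) d := by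
    rw [Set.Ioc_union_Ioo_eq_Ioo (by linarith) (by linarith)]
  rw [hIoo]
  apply IntegrableOn.union
  · -- bound by (√(d/2))⁻¹ * x ^ (-1/2)
    have hbase : IntegrableOn (fun x : ℝ => (Real.sqrt (d/2))⁻¹ * x ^ (-(1:ℝ)/2)) (Set.Ioc 0 (d/2)) := by
      have := (intervalIntegral.intervalIntegrable_rpow' (r := -(1:ℝ)/2) (by norm_num)
        (a := 0) (b := d/2))
      rw [intervalIntegrable_iff, uIoc_of_le h2.le] at this
      exact this.const_mul _
    refine hbase.integrable.mono' (hmeas _) ?_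
    filter_upwards [ae_restrict_mem measurableSet_Ioc] with x hx
    have hx0 : 0 < x := hx.1
    have hxd : x ≤ d/2 := hx.2
    have h1 : Real.sqrt (x * (d/2)) ≤ Real.sqrt (x * (d - x)) := by
      apply Real.sqrt_le_sqrt; nlinarith
    have hpos : 0 < Real.sqrt (x * (d/2)) := Real.sqrt_pos.2 (by nlinarith)
    rw [Real.norm_eq_abs, abs_of_nonneg (by positivity)]
    calc (Real.sqrt (x * (d - x)))⁻¹ ≤ (Real.sqrt (x * (d/2)))⁻¹ := by
          exact inv_anti₀ hpos h1
      _ = (Real.sqrt (d/2))⁻¹ * x ^ (-(1:ℝ)/2) := by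
          rw [Real.sqrt_mul hx0.le, mul_inv, show (-(1:ℝ)/2) = -(1/2:ℝ) by norm_num,
            Real.rpow_neg hx0.le, ← Real.sqrt_eq_rpow, mul_comm]
  · have hbase : IntegrableOn (fun x : ℝ => (Real.sqrt (d/2))⁻¹ * (d - x) ^ (-(1:ℝ)/2)) (Set.Ioo (d/2) d) := by
      have h0 := (intervalIntegral.intervalIntegrable_rpow' (r := -(1:ℝ)/2) (by norm_num)
        (a := 0) (b := d/2))
      have h1 := (h0.comp_sub_left d).const_mul (Real.sqrt (d/2))⁻¹
      rw [intervalIntegrable_iff, Set.uIoc_comm] at h1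
      rw [show d - d/2 = d/2 by ring, sub_zero, uIoc_of_le (by linarith)] at h1
      exact h1.mono_set Set.Ioo_subset_Ioc_self
    refine hbase.integrable.mono' (hmeas _) ?_
    filter_upwards [ae_restrict_mem measurableSet_Ioo] with x hx
    have hx0 : d/2 ≤ x := hx.1.le
    have hxd : x < d := hx.2
    have hdx : 0 < d - x := by linarith
    have h1 : Real.sqrt ((d/2) * (d - x)) ≤ Real.sqrt (x * (d - x)) := by
      apply Real.sqrt_le_sqrt; nlinarith
    have hpos : 0 < Real.sqrt ((d/2) * (d - x)) := Real.sqrt_pos.2 (by nlinarith)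
    rw [Real.norm_eq_abs, abs_of_nonneg (by positivity)]
    calc (Real.sqrt (x * (d - x)))⁻¹ ≤ (Real.sqrt ((d/2) * (d - x)))⁻¹ := inv_anti₀ hpos h1
      _ = (Real.sqrt (d/2))⁻¹ * (d - x) ^ (-(1:ℝ)/2) := by
          rw [Real.sqrt_mul (by linarith : (0:ℝ) ≤ d/2), mul_inv,
            show (-(1:ℝ)/2) = -(1/2:ℝ) by norm_num, Real.rpow_neg hdx.le, ← Real.sqrt_eq_rpow]

lemma key_integrable {d t : ℝ} (hd0 : 0 < d) (ht0 : 0 ≤ t) (htd : t * d < 1) :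
    IntervalIntegrable (fun x => ((1 - t*x) * Real.sqrt (x * (d-x)))⁻¹) volume 0 d := by
  have htd0 : 0 < 1 - t*d := by linarith
  rw [intervalIntegrable_iff_integrableOn_Ioo_of_le hd0.le]
  have hbase := (sqrt_integrable hd0).const_mul (1 - t*d)⁻¹
  refine hbase.mono' ?_ ?_
  · exact (((by continuity : Continuous fun x : ℝ => (1 - t*x) * Real.sqrt (x * (d-x)))).measurable.inv).aestronglyMeasurable
  · filter_upwards [ae_restrict_mem measurableSet_Ioo] with x hx
    obtain ⟨hx0, hxd⟩ := hx
    have hdx : 0 < d - x := by linarith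
    have h1tx : 0 < 1 - t*x := by nlinarith
    have hsx : 0 < Real.sqrt (x*(d-x)) := Real.sqrt_pos.2 (by positivity)
    rw [Real.norm_eq_abs, abs_of_nonneg (by positivity),
      show (1 - t*d)⁻¹ * (Real.sqrt (x*(d-x)))⁻¹ = ((1-t*d) * Real.sqrt (x*(d-x)))⁻¹ from (mul_inv _ _).symm]
    apply inv_anti₀ (by positivity)
    apply mul_le_mul_of_nonneg_right _ hsx.le
    nlinarith

lemma key_integral {d t : ℝ} (hd0 : 0 < d) (ht0 : 0 ≤ t) (htd : t * d < 1) :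
    ∫ x in (0:ℝ)..d, ((1 - t*x) * Real.sqrt (x * (d-x)))⁻¹ = π / Real.sqrt (1 - t*d) := by
  set F : ℝ → ℝ := fun x => (Real.sqrt (1 - t*d))⁻¹ *
      Real.arcsin (((2 - t*d)*x - d) / (d * (1 - t*x))) with hF
  have htd0 : 0 < 1 - t*d := by linarith
  have hden : ∀ x ∈ Icc (0:ℝ) d, 0 < 1 - t*x := by
    intro x hx
    have : t * x ≤ t * d := by nlinarith [hx.2]
    linarith
  have hcont : ContinuousOn F (Icc 0 d) := by
    apply ContinuousOn.mul continuousOn_const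
    apply Real.continuous_arcsin.comp_continuousOn
    apply ContinuousOn.div
    · fun_prop
    · fun_prop
    · intro x hx
      have := hden x hx
      positivity
  have hderiv : ∀ x ∈ Ioo (0:ℝ) d, HasDerivAt F (((1 - t*x) * Real.sqrt (x * (d-x)))⁻¹) x := by
    intro x hx
    obtain ⟨hx0, hxd⟩ := hx
    have hdx : 0 < d - x := by linarith
    have h1tx : 0 < 1 - t*x := hden x ⟨hx0.le, hxd.le⟩
    have hdd : d * (1 - t*x) ≠ 0 := by positivity
    set A : ℝ := ((2 - t*d)*x - d) / (d * (1 - t*x)) with hA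
    have hsq : 1 - A^2 = 4*x*(d-x)*(1-t*d) / (d * (1 - t*x))^2 := by
      rw [hA]; field_simp; ring
    have hsqpos : 0 < 1 - A^2 := by rw [hsq]; positivity
    have hA1 : A ≠ -1 := by nlinarith
    have hA2 : A ≠ 1 := by nlinarith
    -- derivative of A
    have hnum : HasDerivAt (fun y => (2 - t*d)*y - d) (2 - t*d) x := by
      simpa using ((hasDerivAt_id x).const_mul (2 - t*d)).sub_const d
    have hden' : HasDerivAt (fun y => d * (1 - t*y)) (d * (-t)) x := by
      have : HasDerivAt (fun y : ℝ => 1 - t*y) (-t) x := by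
        simpa using ((hasDerivAt_id x).const_mul t).const_sub 1
      simpa using this.const_mul d
    have hAd : HasDerivAt (fun y => ((2 - t*d)*y - d) / (d * (1 - t*y)))
        (((2 - t*d) * (d * (1 - t*x)) - ((2 - t*d)*x - d) * (d * (-t))) / (d * (1 - t*x))^2) x :=
      hnum.div hden' hdd
    have harc := (Real.hasDerivAt_arcsin hA1 hA2).comp x hAd
    have hfinal := harc.const_mul (Real.sqrt (1 - t*d))⁻¹
    refine hfinal.congr_deriv ?_
    symm
    -- value equality
    have hxds : 0 < x * (d - x) := by positivity
    have hs1 : Real.sqrt (1 - A^2) = 2 * Real.sqrt (x*(d-x)) * Real.sqrt (1-t*d) / (d * (1 - t*x)) := by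
      rw [hsq]
      have e1 : (2 * Real.sqrt (x*(d-x)) * Real.sqrt (1-t*d))^2 = 4*(x*(d-x))*(1-t*d) := by
        rw [mul_pow, mul_pow, Real.sq_sqrt hxds.le, Real.sq_sqrt htd0.le]; ring
      rw [show 4*x*(d-x)*(1-t*d) / (d * (1 - t*x))^2
          = (2 * Real.sqrt (x*(d-x)) * Real.sqrt (1-t*d) / (d * (1 - t*x)))^2 by
        rw [div_pow, e1]; ring]
      exact Real.sqrt_sq (by positivity)
    rw [hs1]
    set u := Real.sqrt (1 - t*d) with hu
    set v := Real.sqrt (x*(d-x)) with hv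
    have hu0 : 0 < u := Real.sqrt_pos.2 htd0
    have hv0 : 0 < v := Real.sqrt_pos.2 hxds
    have hu2 : u^2 = 1 - t*d := Real.sq_sqrt htd0.le
    have hN : (2 - t*d) * (d * (1 - t*x)) - ((2 - t*d)*x - d) * (d * (-t)) = 2*d*u^2 := by
      rw [hu2]; ring
    rw [hN]
    field_simp
  have hint : IntervalIntegrable (fun x => ((1 - t*x) * Real.sqrt (x * (d-x)))⁻¹) volume 0 d :=
    key_integrable hd0 ht0 htd
  rw [integral_eq_sub_of_hasDeriv_right_of_le hd0.le hcont
    (fun x hx => (hderiv x hx).hasDerivWithinAt) hint]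
  have hAd1 : ((2 - t*d)*d - d) / (d * (1 - t*d)) = 1 := by
    rw [show (2 - t*d)*d - d = d * (1 - t*d) by ring]
    field_simp
    exact div_self (by linarith : (0:ℝ) < 1 - d*t).ne'
  have hAd0 : ((2 - t*d)*0 - d) / (d * (1 - t*0)) = -1 := by
    field_simp
    ring
  rw [hF]
  simp only [hAd1, hAd0]
  rw [Real.arcsin_one, Real.arcsin_neg_one]
  have hst : 0 < Real.sqrt (1 - t*d) := Real.sqrt_pos.2 htd0
  field_simp
  ring

lemma inner_log {x : ℝ} (hx0 : 0 < x) (hx1 : x < 1) :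
    ∫ s in (0:ℝ)..1, x / (1 - s*x) = -Real.log (1 - x) := by
  have hderiv : ∀ s ∈ uIcc (0:ℝ) 1, HasDerivAt (fun s => -Real.log (1 - s*x)) (x / (1 - s*x)) s := by
    intro s hs
    rw [uIcc_of_le zero_le_one] at hs
    have hpos : 0 < 1 - s*x := by nlinarith [hs.1, hs.2]
    have h1 : HasDerivAt (fun s : ℝ => 1 - s*x) (-x) s := by
      simpa using ((hasDerivAt_id s).mul_const x).const_sub 1
    have := (h1.log hpos.ne').neg
    refine this.congr_deriv ?_
    ring
  have hcont : ContinuousOn (fun s : ℝ => x / (1 - s*x)) (uIcc 0 1) := by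
    apply ContinuousOn.div continuousOn_const (by fun_prop)
    intro s hs
    rw [uIcc_of_le zero_le_one] at hs
    nlinarith [hs.1, hs.2]
  rw [integral_eq_sub_of_hasDerivAt hderiv (hcont.intervalIntegrable)]
  norm_num

lemma outer_integral {d : ℝ} (hd0 : 0 < d) (hd1 : d < 1) :
    ∫ s in (0:ℝ)..1, π * d / (Real.sqrt (1-d) * (Real.sqrt (1-s*d) * (Real.sqrt (1-s*d) + Real.sqrt (1-d))))
      = 2 * π / Real.sqrt (1-d) * (Real.log (1 + Real.sqrt (1-d)) - Real.log (2 * Real.sqrt (1-d))) := by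
  set b := Real.sqrt (1-d) with hb
  have hb0 : 0 < b := Real.sqrt_pos.2 (by linarith)
  have hderiv : ∀ s ∈ uIcc (0:ℝ) 1, HasDerivAt
      (fun s => -(2*π/b) * Real.log (Real.sqrt (1-s*d) + b))
      (π * d / (b * (Real.sqrt (1-s*d) * (Real.sqrt (1-s*d) + b)))) s := by
    intro s hs
    rw [uIcc_of_le zero_le_one] at hs
    have hpos : 0 < 1 - s*d := by nlinarith [hs.1, hs.2]
    have hu0 : 0 < Real.sqrt (1-s*d) := Real.sqrt_pos.2 hpos
    have h1 : HasDerivAt (fun s : ℝ => 1 - s*d) (-d) s := by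
      simpa using ((hasDerivAt_id s).mul_const d).const_sub 1
    have h2 : HasDerivAt (fun s : ℝ => Real.sqrt (1-s*d) + b)
        (-d / (2 * Real.sqrt (1-s*d))) s := by
      have := ((Real.hasDerivAt_sqrt hpos.ne').comp s h1).add_const b
      refine this.congr_deriv ?_
      symm
      ring
    have h3 := (h2.log (by positivity)).const_mul (-(2*π/b))
    refine h3.congr_deriv ?_
    symm
    field_simp
  have hcont : ContinuousOn (fun s : ℝ =>
      π * d / (b * (Real.sqrt (1-s*d) * (Real.sqrt (1-s*d) + b)))) (uIcc 0 1) := by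
    apply ContinuousOn.div continuousOn_const (by fun_prop)
    intro s hs
    rw [uIcc_of_le zero_le_one] at hs
    have hpos : 0 < 1 - s*d := by nlinarith [hs.1, hs.2]
    have hu0 : 0 < Real.sqrt (1-s*d) := Real.sqrt_pos.2 hpos
    positivity
  rw [integral_eq_sub_of_hasDerivAt hderiv (hcont.intervalIntegrable)]
  have h1 : Real.sqrt (1 - 1*d) = b := by rw [hb]; norm_num
  have h0 : Real.sqrt (1 - 0*d) = 1 := by norm_num
  rw [h1, h0]
  rw [show b + b = 2*b by ring]
  ring

noncomputable def dblF (d x s : ℝ) : ℝ := x * ((1 - s*x) * ((1 - x) * Real.sqrt (x*(d-x))))⁻¹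

lemma dblF_meas (d : ℝ) (μ ν : Measure ℝ) :
    AEStronglyMeasurable (Function.uncurry (dblF d)) (μ.prod ν) := by
  have hc : Continuous fun p : ℝ × ℝ =>
      (1 - p.2*p.1) * ((1 - p.1) * Real.sqrt (p.1*(d-p.1))) := by fun_prop
  exact (measurable_fst.mul hc.measurable.inv).aestronglyMeasurable

lemma dblF_prod_integrable {d : ℝ} (hd0 : 0 < d) (hd1 : d < 1) :
    Integrable (Function.uncurry (dblF d))
      ((volume.restrict (Ioo (0:ℝ) d)).prod (volume.restrict (Ioo (0:ℝ) 1))) := by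
  haveI : IsFiniteMeasure (volume.restrict (Ioo (0:ℝ) 1)) := by
    constructor
    rw [Measure.restrict_apply_univ, Real.volume_Ioo]
    norm_num
  rw [integrable_prod_iff (dblF_meas d _ _)]
  constructor
  · filter_upwards [ae_restrict_mem measurableSet_Ioo] with x hx
    obtain ⟨hx0, hxd⟩ := hx
    have hcont : ContinuousOn (fun s => dblF d x s) (Icc 0 1) := by
      simp only [dblF]
      apply ContinuousOn.mul continuousOn_const
      apply ContinuousOn.inv₀ (by fun_prop)
      intro s hs
      have h1 : 0 < 1 - s*x := by nlinarith [hs.1, hs.2]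
      have h2 : 0 < 1 - x := by nlinarith
      have h3 : 0 < Real.sqrt (x*(d-x)) := Real.sqrt_pos.2 (by nlinarith)
      positivity
    exact (hcont.integrableOn_Icc).mono_set Ioo_subset_Icc_self
  · have hbase := (sqrt_integrable hd0).const_mul (d / ((1-d)^2))
    apply hbase.mono'
    · exact (dblF_meas d _ _).norm.integral_prod_right'
    · filter_upwards [ae_restrict_mem measurableSet_Ioo] with x hx
      obtain ⟨hx0, hxd⟩ := hx
      have hv : 0 < Real.sqrt (x*(d-x)) := Real.sqrt_pos.2 (by nlinarith)
      have hbound : ∀ᵐ s ∂(volume.restrict (Ioo (0:ℝ) 1)),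
          ‖‖Function.uncurry (dblF d) (x, s)‖‖ ≤ d / ((1-d)^2) * (Real.sqrt (x*(d-x)))⁻¹ := by
        filter_upwards [ae_restrict_mem measurableSet_Ioo] with s hs
        obtain ⟨hs0, hs1⟩ := hs
        have h1 : 0 < 1 - s*x := by nlinarith
        have h2 : 0 < 1 - x := by nlinarith
        have hfpos : 0 ≤ dblF d x s := by simp only [dblF]; positivity
        rw [norm_norm, Function.uncurry_apply_pair, Real.norm_eq_abs, abs_of_nonneg hfpos]
        simp only [dblF]
        calc x * ((1 - s*x) * ((1 - x) * Real.sqrt (x*(d-x))))⁻¹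
            ≤ d * ((1-d) * ((1-d) * Real.sqrt (x*(d-x))))⁻¹ := by
              apply mul_le_mul hxd.le _
                (inv_nonneg.2 (mul_nonneg h1.le (mul_nonneg h2.le (Real.sqrt_nonneg _)))) hd0.le
              have h1d : (0:ℝ) < 1 - d := by linarith
              apply inv_anti₀ (mul_pos h1d (mul_pos h1d hv))
              have k1 : (1:ℝ) - d ≤ 1 - s*x := by nlinarith
              have k2 : (1:ℝ) - d ≤ 1 - x := by nlinarith
              calc (1-d) * ((1-d) * Real.sqrt (x*(d-x)))
                  ≤ (1-s*x) * ((1-d) * Real.sqrt (x*(d-x))) :=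
                    mul_le_mul_of_nonneg_right k1 (mul_nonneg h1d.le hv.le)
                _ ≤ (1-s*x) * ((1-x) * Real.sqrt (x*(d-x))) :=
                    mul_le_mul_of_nonneg_left (mul_le_mul_of_nonneg_right k2 hv.le) h1.le
          _ = d / ((1-d)^2) * (Real.sqrt (x*(d-x)))⁻¹ := by
              rw [mul_inv, mul_inv]
              have : (0:ℝ) < 1 - d := by linarith
              field_simp
      have hle := norm_integral_le_of_norm_le_const (μ := volume.restrict (Ioo (0:ℝ) 1)) hbound
      rw [Real.norm_eq_abs, abs_of_nonneg (by positivity)]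
      calc (∫ s, ‖Function.uncurry (dblF d) (x, s)‖ ∂(volume.restrict (Ioo (0:ℝ) 1)))
          ≤ |∫ s, ‖Function.uncurry (dblF d) (x, s)‖ ∂(volume.restrict (Ioo (0:ℝ) 1))| := le_abs_self _
        _ ≤ d / ((1-d)^2) * (Real.sqrt (x*(d-x)))⁻¹
            * ((volume.restrict (Ioo (0:ℝ) 1)) univ).toReal := hle
        _ = d / ((1-d)^2) * (Real.sqrt (x*(d-x)))⁻¹ := by
            rw [Measure.restrict_apply_univ, Real.volume_Ioo]
            norm_num

lemma dblF_inner_s {d x : ℝ} (hd0 : 0 < d) (hd1 : d < 1) (hx : x ∈ Ioo 0 d) :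
    (∫ s in Ioo (0:ℝ) 1, dblF d x s)
      = -Real.log (1-x) * ((1 - x) * Real.sqrt (x*(d-x)))⁻¹ := by
  obtain ⟨hx0, hxd⟩ := hx
  rw [← MeasureTheory.integral_Ioc_eq_integral_Ioo, ← intervalIntegral.integral_of_le zero_le_one]
  have : ∀ s, dblF d x s = (x / (1 - s*x)) * ((1 - x) * Real.sqrt (x*(d-x)))⁻¹ := by
    intro s
    simp only [dblF]
    rw [mul_inv, ← mul_assoc, div_eq_mul_inv]
  simp only [this]
  rw [intervalIntegral.integral_mul_const, inner_log hx0 (by linarith)]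

lemma dblF_inner_x {d s : ℝ} (hd0 : 0 < d) (hd1 : d < 1) (hs : s ∈ Ioo (0:ℝ) 1) :
    (∫ x in Ioo (0:ℝ) d, dblF d x s)
      = π * d / (Real.sqrt (1-d) * (Real.sqrt (1-s*d) * (Real.sqrt (1-s*d) + Real.sqrt (1-d)))) := by
  obtain ⟨hs0, hs1⟩ := hs
  have hb0 : 0 < Real.sqrt (1 - d) := Real.sqrt_pos.2 (by linarith)
  have hb2 : Real.sqrt (1 - d) ^ 2 = 1 - d := Real.sq_sqrt (by linarith)
  have hsd : s * d < 1 := by nlinarith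
  have hu0 : 0 < Real.sqrt (1 - s*d) := Real.sqrt_pos.2 (by nlinarith)
  have hu2 : Real.sqrt (1 - s*d) ^ 2 = 1 - s*d := Real.sq_sqrt (by nlinarith)
  have hint1 := key_integrable (t := 1) hd0 zero_le_one (by linarith)
  have hint2 := key_integrable (t := s) hd0 hs0.le hsd
  rw [intervalIntegrable_iff_integrableOn_Ioo_of_le hd0.le] at hint1 hint2
  have hsplit : ∀ x ∈ Ioo (0:ℝ) d, dblF d x s
      = (1-s)⁻¹ * (((1 - 1*x) * Real.sqrt (x*(d-x)))⁻¹ - ((1 - s*x) * Real.sqrt (x*(d-x)))⁻¹) := by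
    intro x hx
    obtain ⟨hx0, hxd⟩ := hx
    have h1 : 0 < 1 - s*x := by nlinarith
    have h2 : 0 < 1 - x := by nlinarith
    have hv : 0 < Real.sqrt (x*(d-x)) := Real.sqrt_pos.2 (by nlinarith)
    have hs' : (0:ℝ) < 1 - s := by linarith
    simp only [dblF, one_mul]
    set v := Real.sqrt (x*(d-x)) with hvdef
    have h1' : (1 - x*s) ≠ 0 := ne_of_gt (by linarith [mul_comm x s])
    field_simp
    ring
  rw [setIntegral_congr_fun measurableSet_Ioo hsplit, MeasureTheory.integral_const_mul,
    MeasureTheory.integral_sub hint1 hint2]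
  have e1 : ∫ x in Ioo (0:ℝ) d, ((1 - 1*x) * Real.sqrt (x*(d-x)))⁻¹ = π / Real.sqrt (1-d) := by
    rw [← MeasureTheory.integral_Ioc_eq_integral_Ioo, ← intervalIntegral.integral_of_le hd0.le,
      key_integral hd0 zero_le_one (by linarith), one_mul]
  have e2 : ∫ x in Ioo (0:ℝ) d, ((1 - s*x) * Real.sqrt (x*(d-x)))⁻¹ = π / Real.sqrt (1 - s*d) := by
    rw [← MeasureTheory.integral_Ioc_eq_integral_Ioo, ← intervalIntegral.integral_of_le hd0.le,
      key_integral hd0 hs0.le hsd]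
  rw [e1, e2]
  have huv : (Real.sqrt (1-s*d) - Real.sqrt (1-d)) * (Real.sqrt (1-s*d) + Real.sqrt (1-d))
      = d * (1-s) := by linear_combination hu2 - hb2
  have hs' : (0:ℝ) < 1 - s := by linarith
  field_simp
  linear_combination huv

/-- `∫_0^d log(1-x)/((1-x)√(x(d-x))) dx
  = (π/√(1-d)) log((4(1-d)/d)·(1-√(1-d))/(1+√(1-d)))` for `d ∈ (0,1)`. -/
theorem log_integral_hard_edge₂ (d : ℝ) (hd : d ∈ Set.Ioo (0 : ℝ) 1) :
    (∫ x in (0 : ℝ)..d, 1 / (1 - x) * (Real.log (1 - x) / Real.sqrt (x * (d - x))))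
      = π / Real.sqrt (1 - d) *
          Real.log ((4 * (1 - d) / d) * ((1 - Real.sqrt (1 - d)) / (1 + Real.sqrt (1 - d)))) := by
  obtain ⟨hd0, hd1⟩ := hd
  have hb0 : 0 < Real.sqrt (1 - d) := Real.sqrt_pos.2 (by linarith)
  have hb2 : Real.sqrt (1 - d) ^ 2 = 1 - d := Real.sq_sqrt (by linarith)
  have hb1 : Real.sqrt (1 - d) < 1 := by nlinarith
  have step1 : (∫ x in (0:ℝ)..d, 1 / (1 - x) * (Real.log (1 - x) / Real.sqrt (x * (d - x))))
      = ∫ x in Ioo (0:ℝ) d, -(∫ s in Ioo (0:ℝ) 1, dblF d x s) := by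
    rw [intervalIntegral.integral_of_le hd0.le, MeasureTheory.integral_Ioc_eq_integral_Ioo]
    apply setIntegral_congr_fun measurableSet_Ioo
    intro x hx
    dsimp only
    rw [dblF_inner_s hd0 hd1 hx]
    obtain ⟨hx0, hxd⟩ := hx
    have hv : 0 < Real.sqrt (x*(d-x)) := Real.sqrt_pos.2 (by nlinarith)
    have h2 : (0:ℝ) < 1 - x := by linarith
    field_simp
  rw [step1, MeasureTheory.integral_neg, MeasureTheory.integral_integral_swap
    (dblF_prod_integrable hd0 hd1)]
  have step3 : (∫ s in Ioo (0:ℝ) 1, (∫ x in Ioo (0:ℝ) d, dblF d x s))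
      = ∫ s in (0:ℝ)..1, π * d
        / (Real.sqrt (1-d) * (Real.sqrt (1-s*d) * (Real.sqrt (1-s*d) + Real.sqrt (1-d)))) := by
    rw [intervalIntegral.integral_of_le zero_le_one, MeasureTheory.integral_Ioc_eq_integral_Ioo]
    apply setIntegral_congr_fun measurableSet_Ioo
    intro s hs
    dsimp only
    rw [dblF_inner_x hd0 hd1 hs]
  rw [step3, outer_integral hd0 hd1]
  have harg : (4 * (1 - d) / d) * ((1 - Real.sqrt (1-d)) / (1 + Real.sqrt (1-d)))
      = (2*Real.sqrt (1-d)/(1+Real.sqrt (1-d)))^2 := by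
    have hd_eq : d = (1-Real.sqrt (1-d))*(1+Real.sqrt (1-d)) := by linear_combination hb2
    rw [← hb2]
    rw [show (4 * Real.sqrt (1-d)^2 / d) = 4 * Real.sqrt (1-d)^2 / ((1-Real.sqrt (1-d))*(1+Real.sqrt (1-d))) by rw [← hd_eq]]
    have h1 : (0:ℝ) < 1 - Real.sqrt (1-d) := by linarith
    have h2 : (0:ℝ) < 1 + Real.sqrt (1-d) := by linarith
    field_simp
    rw [Real.sqrt_sq hb0.le]; ring
  rw [harg, show ((2*Real.sqrt (1-d)/(1+Real.sqrt (1-d))):ℝ)^2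
      = (2*Real.sqrt (1-d)/(1+Real.sqrt (1-d)))^(2:ℕ) from rfl, Real.log_pow,
    Real.log_div (by positivity) (by positivity)]
  push_cast
  ring
end

section
/- For x ≥ 1 and real B with B > 1, ∫_1^x (x−y)/(√(y²−1)(y+B)) dy = (B+x)/√(B²−1) · log( (1 + Bx + √((B²−1)(x²−1)))/(B+x) ) + (1/2) log( (x − √(x²−1))/(x + √(x²−1)) ). -/
open Real MeasureTheory Set

set_option maxHeartbeats 1000000 in
/-- For `x ≥ 1` and `B > 1`,
`∫_1^x (x-y)/(√(y²-1)(y+B)) dy = (B+x)/√(B²-1) log((1+Bx+√((B²-1)(x²-1)))/(B+x))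
  + (1/2) log((x-√(x²-1))/(x+√(x²-1)))`. -/
theorem rate_function_integral (x B : ℝ) (hx : 1 ≤ x) (hB : 1 < B) :
    (∫ y in (1 : ℝ)..x, (x - y) / (Real.sqrt (y ^ 2 - 1) * (y + B)))
      = (B + x) / Real.sqrt (B ^ 2 - 1) *
          Real.log ((1 + B * x + Real.sqrt ((B ^ 2 - 1) * (x ^ 2 - 1))) / (B + x))
        + 1 / 2 * Real.log ((x - Real.sqrt (x ^ 2 - 1)) / (x + Real.sqrt (x ^ 2 - 1))) := by
  have hB2 : (0:ℝ) < B^2 - 1 := by nlinarith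
  set c := Real.sqrt (B^2 - 1) with hc_def
  have hc : 0 < c := Real.sqrt_pos.2 hB2
  have hc2 : c^2 = B^2 - 1 := Real.sq_sqrt hB2.le
  set s : ℝ → ℝ := fun y => Real.sqrt (y^2 - 1) with hs_def
  have hs_nonneg : ∀ y, 0 ≤ s y := fun y => Real.sqrt_nonneg _
  set G : ℝ → ℝ := fun y =>
    (B+x)/c * (Real.log (1+B*y+c*s y) - Real.log (B+y)) - Real.log (y + s y) with hG_def
  -- derivative on the interior
  have key : ∀ y ∈ Ioo (1:ℝ) x, HasDerivAt G ((x-y)/(s y*(y+B))) y := by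
    intro y hy
    have hy1 : 1 < y := hy.1
    have hpos : 0 < y^2 - 1 := by nlinarith
    have hsy : 0 < s y := Real.sqrt_pos.2 hpos
    have hsy2 : s y ^ 2 = y^2 - 1 := Real.sq_sqrt hpos.le
    have hN : 0 < 1 + B*y + c*s y := by nlinarith [hs_nonneg y, mul_nonneg hc.le (hs_nonneg y)]
    have hBy : 0 < B + y := by linarith
    have hds : HasDerivAt s (y / s y) y := by
      have h1 : HasDerivAt (fun t : ℝ => t^2 - 1) (2*y) y := by
        simpa using ((hasDerivAt_pow 2 y).sub_const 1)
      have h2 := (Real.hasDerivAt_sqrt hpos.ne').comp y h1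
      refine h2.congr_deriv ?_
      rw [hs_def]
      field_simp
    have hdN : HasDerivAt (fun t => 1 + B*t + c*s t) (B + c*(y/s y)) y := by
      have := (((hasDerivAt_id y).const_mul B).const_add 1).add (hds.const_mul c)
      exact this.congr_deriv (by ring)
    have hdlogN : HasDerivAt (fun t => Real.log (1+B*t+c*s t))
        ((B + c*(y/s y))/(1+B*y+c*s y)) y := by
      simpa [div_eq_mul_inv] using hdN.log hN.ne'
    have hdlogD : HasDerivAt (fun t => Real.log (B+t)) (1/(B+y)) y := by
      have := ((hasDerivAt_id y).const_add B).log hBy.ne'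
      simpa using this
    have hdlog2 : HasDerivAt (fun t => Real.log (t + s t)) ((1 + y/s y)/(y+s y)) y := by
      have h3 : HasDerivAt (fun t => t + s t) (1 + y/s y) y := (hasDerivAt_id y).add hds
      simpa [div_eq_mul_inv] using h3.log (by positivity)
    have hdG : HasDerivAt G
        ((B+x)/c * ((B + c*(y/s y))/(1+B*y+c*s y) - 1/(B+y)) - (1 + y/s y)/(y+s y)) y := by
      exact ((hdlogN.sub hdlogD).const_mul ((B+x)/c)).sub hdlog2
    convert hdG using 1
    have e1 : (1 + y/s y)/(y+s y) = 1/s y := by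
      rw [div_eq_div_iff (by positivity) hsy.ne']
      field_simp
      ring
    have e2 : (B + c*(y/s y))/(1+B*y+c*s y) - 1/(B+y) = c/(s y*(y+B)) := by
      rw [div_sub_div _ _ hN.ne' hBy.ne', div_eq_div_iff (by positivity) (by positivity)]
      field_simp
      linear_combination (-(s y)*(B+y))*hc2 + (-c*(B+y))*hsy2
    rw [e1, e2]
    field_simp
    ring
  -- continuity on the closed interval
  have hs_cont : Continuous s := by
    rw [hs_def]; exact Real.continuous_sqrt.comp (by continuity)
  have hGcont : ContinuousOn G (Icc 1 x) := by
    rw [hG_def]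
    apply ContinuousOn.sub
    · apply ContinuousOn.mul continuousOn_const
      apply ContinuousOn.sub
      · apply ContinuousOn.log
        · exact (by continuity : Continuous fun y => 1 + B*y + c*s y).continuousOn
        · intro y hy
          have : (0:ℝ) < 1 + B*y + c*s y := by
            nlinarith [hs_nonneg y, mul_nonneg hc.le (hs_nonneg y), hy.1]
          exact this.ne'
      · apply ContinuousOn.log (by continuity : Continuous fun y : ℝ => B + y).continuousOn
        intro y hy
        have : (0:ℝ) < B + y := by nlinarith [hy.1]
        exact this.ne'
    · apply ContinuousOn.log (by continuity : Continuous fun y : ℝ => y + s y).continuousOn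
      intro y hy
      have : (0:ℝ) < y + s y := by nlinarith [hs_nonneg y, hy.1]
      exact this.ne'
  -- integrability of the integrand
  have hint : IntervalIntegrable (fun y => (x - y) / (s y * (y + B))) volume 1 x := by
    have hrpow : IntervalIntegrable (fun y : ℝ => (y - 1) ^ (-(1/2) : ℝ)) volume 1 x := by
      have h0 : IntervalIntegrable (fun y : ℝ => y ^ (-(1/2) : ℝ)) volume 0 (x - 1) :=
        intervalIntegral.intervalIntegrable_rpow' (by norm_num)
      have := h0.comp_sub_right 1
      simpa using this
    have hC : IntervalIntegrable
        (fun y : ℝ => (x - 1) / (Real.sqrt 2 * (1 + B)) * (y - 1) ^ (-(1/2) : ℝ)) volume 1 x :=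
      hrpow.const_mul _
    apply hC.mono_fun
    · apply Measurable.aestronglyMeasurable
      exact (measurable_const.sub measurable_id).div
        ((hs_cont.measurable).mul (measurable_id.add measurable_const))
    · filter_upwards [ae_restrict_mem measurableSet_uIoc] with y hy
      rw [Set.uIoc_of_le hx] at hy
      obtain ⟨hy1, hyx⟩ := hy
      have hym : 0 < y - 1 := by linarith
      have hsqy : 0 < Real.sqrt (y - 1) := Real.sqrt_pos.2 hym
      have hrw : (y - 1) ^ (-(1/2) : ℝ) = (Real.sqrt (y - 1))⁻¹ := by
        rw [Real.sqrt_eq_rpow, ← Real.rpow_neg hym.le]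
      have hslb : Real.sqrt 2 * Real.sqrt (y - 1) ≤ s y := by
        rw [hs_def, ← Real.sqrt_mul (by norm_num : (0:ℝ) ≤ 2)]
        apply Real.sqrt_le_sqrt
        nlinarith
      have hden_pos : 0 < Real.sqrt 2 * Real.sqrt (y - 1) * (1 + B) := by positivity
      have hsy : 0 < s y := lt_of_lt_of_le (by positivity) hslb
      have hBy : 0 < y + B := by linarith
      rw [Real.norm_eq_abs, Real.norm_eq_abs,
        abs_of_nonneg (div_nonneg (by linarith) (by positivity)), abs_of_nonneg]
      · calc (x - y) / (s y * (y + B))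
            ≤ (x - 1) / (Real.sqrt 2 * Real.sqrt (y - 1) * (1 + B)) := by
              apply div_le_div₀ (by linarith) (by linarith) hden_pos
              apply mul_le_mul hslb (by linarith) (by linarith) hsy.le
          _ = (x - 1) / (Real.sqrt 2 * (1 + B)) * (y - 1) ^ (-(1/2) : ℝ) := by
              rw [hrw, ← one_div, div_mul_div_comm, mul_one, mul_assoc, mul_comm (Real.sqrt (y-1)),
                ← mul_assoc]
      · exact mul_nonneg (div_nonneg (by linarith) (by positivity)) (Real.rpow_nonneg hym.le _)
  -- FTC
  have hFTC := intervalIntegral.integral_eq_sub_of_hasDeriv_right_of_le hx hGcont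
    (fun y hy => (key y hy).hasDerivWithinAt) hint
  rw [hFTC]
  -- endpoint values
  have hs1 : s 1 = 0 := by rw [hs_def]; norm_num
  have hG1 : G 1 = 0 := by
    simp only [hG_def, hs1, mul_one, mul_zero, add_zero, Real.log_one, sub_zero]
    rw [add_comm 1 B, sub_self, mul_zero]
  have hsx2 : s x ^ 2 = x^2 - 1 := Real.sq_sqrt (by nlinarith)
  have hxs : 0 < x + s x := by nlinarith [hs_nonneg x]
  have hNx : 0 < 1 + B*x + c*s x := by
    nlinarith [hs_nonneg x, mul_nonneg hc.le (hs_nonneg x)]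
  have hBx : 0 < B + x := by linarith
  have hmul : Real.sqrt ((B^2-1)*(x^2-1)) = c * s x := by
    rw [hs_def, hc_def, ← Real.sqrt_mul hB2.le]
  have hlog2 : Real.log ((x - s x)/(x + s x)) = -(2 * Real.log (x + s x)) := by
    have hinv : x - s x = (x + s x)⁻¹ := by
      apply eq_inv_of_mul_eq_one_left
      nlinarith
    rw [hinv, div_eq_mul_inv, ← mul_inv, ← sq, Real.log_inv, Real.log_pow]
    push_cast
    ring
  rw [hG1, sub_zero]
  simp only [hG_def]
  rw [hmul, Real.log_div hNx.ne' hBx.ne', hlog2]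
  ring
end
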